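/- arXiv:2003.06246 — 4 statements merged into one kernel-verified Lean document; each statement's English description precedes it below -/
import Mathlib

section
/- Let k be a field, A an r×r matrix over k, and 1 ≤ s ≤ r. For any i, l ∈ I_{s,r}: Σ_{j ∈ I_{s,r}} (−1)^{τ(l)+τ(j)} A{i; j} · A[l; j] equals det(A) if i = l, and equals 0 if i ≠ l. (Generalized Laplace expansion along s rows, including the alien-cofactor case.) -/
open Matrix BigOperators

section Stmt3AuxSection
open Equiv Finset

namespace Stmt3Aux

variable {r s : ℕ}

/-- The canonical equivalence `Fin s ⊕ Fin (r-s) ≃ Fin r`. -/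
def ι (hsr : s ≤ r) : Fin s ⊕ Fin (r - s) ≃ Fin r :=
  finSumFinEquiv.trans (finCongr (Nat.add_sub_cancel' hsr))

abbrev T (r s : ℕ) := {S : Finset (Fin r) // S.card = s}

lemma cardc (J : T r s) : (J.1ᶜ).card = r - s := by
  rw [Finset.card_compl, J.2, Fintype.card_fin]

/-- increasing enumeration of J -/
def emb (J : T r s) : Fin s → Fin r := J.1.orderEmbOfFin J.2

/-- increasing enumeration of Jᶜ -/
def embc (J : T r s) : Fin (r - s) → Fin r := (J.1ᶜ).orderEmbOfFin (cardc J)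

def g (J : T r s) : Fin s ⊕ Fin (r - s) → Fin r := Sum.elim (emb J) (embc J)

lemma emb_mem (J : T r s) (k : Fin s) : emb J k ∈ J.1 := Finset.orderEmbOfFin_mem _ _ _

lemma embc_not_mem (J : T r s) (a : Fin (r - s)) : embc J a ∉ J.1 := by
  have h : embc J a ∈ J.1ᶜ := Finset.orderEmbOfFin_mem (J.1ᶜ) (cardc J) a
  exact Finset.mem_compl.mp h

lemma emb_inj (J : T r s) : Function.Injective (emb J) :=
  (J.1.orderEmbOfFin J.2).injective

lemma embc_inj (J : T r s) : Function.Injective (embc J) :=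
  ((J.1ᶜ).orderEmbOfFin (cardc J)).injective

lemma g_bij (J : T r s) : Function.Bijective (g J) := by
  have hinj : Function.Injective (g J) := by
    rintro (x | x) (y | y) h
    · simp only [g, Sum.elim_inl] at h; exact congrArg Sum.inl (emb_inj J h)
    · simp only [g, Sum.elim_inl, Sum.elim_inr] at h
      exact absurd (h ▸ emb_mem J x) (embc_not_mem J y)
    · simp only [g, Sum.elim_inl, Sum.elim_inr] at h
      exact absurd (h.symm ▸ emb_mem J y) (embc_not_mem J x)
    · simp only [g, Sum.elim_inr] at h; exact congrArg Sum.inr (embc_inj J h)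
  have : Fintype.card (Fin s ⊕ Fin (r - s)) = Fintype.card (Fin r) := by
    have hsr : s ≤ r := J.2 ▸ (Finset.card_le_univ J.1).trans_eq (by simp)
    simp [Nat.add_sub_cancel' hsr]
  exact (Fintype.bijective_iff_injective_and_card _).2 ⟨hinj, this⟩

noncomputable def sumE (J : T r s) : Fin s ⊕ Fin (r - s) ≃ Fin r :=
  Equiv.ofBijective _ (g_bij J)

@[simp] lemma sumE_inl (J : T r s) (k : Fin s) : sumE J (Sum.inl k) = emb J k := rfl
@[simp] lemma sumE_inr (J : T r s) (a : Fin (r - s)) : sumE J (Sum.inr a) = embc J a := rfl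

/-- The shuffle permutation of `J`. -/
noncomputable def eP (hsr : s ≤ r) (J : T r s) : Perm (Fin r) :=
  ((ι hsr).symm.trans (sumE J) : Fin r ≃ Fin r)

@[simp] lemma eP_apply (hsr : s ≤ r) (J : T r s) (x : Fin r) :
    eP hsr J x = sumE J ((ι hsr).symm x) := rfl

lemma image_emb (J : T r s) : Finset.image (emb J) Finset.univ = J.1 := by
  apply Finset.coe_injective
  simp [emb]

lemma image_embc (J : T r s) : Finset.image (embc J) Finset.univ = J.1ᶜ := by
  apply Finset.coe_injective
  simp [embc]


variable (hsr : s ≤ r)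

/-- global parametrization of permutations -/
noncomputable def E (x : Σ _ : T r s, Perm (Fin s) × Perm (Fin (r - s))) : Perm (Fin r) :=
  ((ι hsr).symm.trans (((Equiv.sumCongr x.2.1 x.2.2)).trans (sumE x.1)) : Fin r ≃ Fin r)

lemma E_inl (x : Σ _ : T r s, Perm (Fin s) × Perm (Fin (r - s))) (k : Fin s) :
    E hsr x (ι hsr (Sum.inl k)) = emb x.1 (x.2.1 k) := by
  simp [E]

lemma E_inr (x : Σ _ : T r s, Perm (Fin s) × Perm (Fin (r - s))) (a : Fin (r - s)) :
    E hsr x (ι hsr (Sum.inr a)) = embc x.1 (x.2.2 a) := by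
  simp [E]

lemma E_eq_mul (x : Σ _ : T r s, Perm (Fin s) × Perm (Fin (r - s))) :
    E hsr x = eP hsr x.1 * ((ι hsr).permCongr (Equiv.sumCongr x.2.1 x.2.2)) := by
  ext y
  simp [E, eP, Equiv.permCongr_apply, Equiv.Perm.mul_apply]

lemma sign_E (x : Σ _ : T r s, Perm (Fin s) × Perm (Fin (r - s))) :
    Equiv.Perm.sign (E hsr x) =
      Equiv.Perm.sign (eP hsr x.1) * (Equiv.Perm.sign x.2.1 * Equiv.Perm.sign x.2.2) := by
  rw [E_eq_mul, _root_.map_mul, Equiv.Perm.sign_permCongr, Equiv.Perm.sign_sumCongr]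

lemma E_bijective : Function.Bijective (E (r := r) (s := s) hsr) := by
  constructor
  · rintro ⟨J, π, ρ⟩ ⟨J', π', ρ'⟩ h
    have hinl : ∀ k : Fin s, emb J (π k) = emb J' (π' k) := fun k => by
      rw [← E_inl hsr ⟨J, π, ρ⟩ k, ← E_inl hsr ⟨J', π', ρ'⟩ k, h]
    have hinr : ∀ a : Fin (r - s), embc J (ρ a) = embc J' (ρ' a) := fun a => by
      rw [← E_inr hsr ⟨J, π, ρ⟩ a, ← E_inr hsr ⟨J', π', ρ'⟩ a, h]
    have hJ : J = J' := by
      apply Subtype.ext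
      rw [← image_emb J, ← image_emb J']
      calc Finset.image (emb J) Finset.univ
          = Finset.image (emb J) (Finset.image π Finset.univ) := by
            rw [Finset.image_univ_equiv]
        _ = Finset.image (emb J ∘ π) Finset.univ := Finset.image_image
        _ = Finset.image (emb J' ∘ π') Finset.univ := Finset.image_congr (fun k _ => hinl k)
        _ = Finset.image (emb J') (Finset.image π' Finset.univ) := Finset.image_image.symm
        _ = Finset.image (emb J') Finset.univ := by rw [Finset.image_univ_equiv]
    subst hJ
    have hπ : π = π' := Equiv.ext fun k => emb_inj J (hinl k)
    have hρ : ρ = ρ' := Equiv.ext fun a => embc_inj J (hinr a)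
    simp [hπ, hρ]
  · intro σ
    have hinjl : Function.Injective fun k : Fin s => σ (ι hsr (Sum.inl k)) :=
      fun a b h => Sum.inl_injective ((ι hsr).injective (σ.injective h))
    have hinjr : Function.Injective fun a : Fin (r - s) => σ (ι hsr (Sum.inr a)) :=
      fun a b h => Sum.inr_injective ((ι hsr).injective (σ.injective h))
    set Jset : Finset (Fin r) := Finset.image (fun k : Fin s => σ (ι hsr (Sum.inl k))) Finset.univ
      with hJset
    have hJcard : Jset.card = s := by
      rw [hJset, Finset.card_image_of_injective _ hinjl, Finset.card_univ, Fintype.card_fin]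
    set J : T r s := ⟨Jset, hJcard⟩ with hJ
    have hmem : ∀ k : Fin s, σ (ι hsr (Sum.inl k)) ∈ J.1 := fun k =>
      Finset.mem_image_of_mem _ (Finset.mem_univ k)
    have hmemc : ∀ a : Fin (r - s), σ (ι hsr (Sum.inr a)) ∈ J.1ᶜ := by
      intro a
      rw [Finset.mem_compl]
      intro hmemJ
      obtain ⟨k, _, hk⟩ := Finset.mem_image.mp hmemJ
      exact Sum.inl_ne_inr ((ι hsr).injective (σ.injective hk))
    set π0 : Fin s → Fin s := fun k => (J.1.orderIsoOfFin J.2).symm ⟨_, hmem k⟩ with hπ0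
    have hπ0inj : Function.Injective π0 := by
      intro a b h
      apply hinjl
      have := congrArg (fun z => ((J.1.orderIsoOfFin J.2) z : Fin r)) h
      simpa [hπ0] using this
    set ρ0 : Fin (r - s) → Fin (r - s) :=
      fun a => ((J.1ᶜ).orderIsoOfFin (cardc J)).symm ⟨_, hmemc a⟩ with hρ0
    have hρ0inj : Function.Injective ρ0 := by
      intro a b h
      apply hinjr
      have := congrArg (fun z => (((J.1ᶜ).orderIsoOfFin (cardc J)) z : Fin r)) h
      simpa [hρ0] using this
    refine ⟨⟨J, Equiv.ofBijective π0 (Finite.injective_iff_bijective.mp hπ0inj),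
      Equiv.ofBijective ρ0 (Finite.injective_iff_bijective.mp hρ0inj)⟩, ?_⟩
    apply Equiv.ext
    intro x
    obtain ⟨y, rfl⟩ := (ι hsr).surjective x
    cases y with
    | inl k =>
        rw [E_inl]
        show (J.1.orderEmbOfFin J.2) (π0 k) = _
        rw [hπ0]
        show ((J.1.orderIsoOfFin J.2) ((J.1.orderIsoOfFin J.2).symm ⟨_, hmem k⟩) : Fin r) = _
        rw [OrderIso.apply_symm_apply]
    | inr a =>
        rw [E_inr]
        show ((J.1ᶜ).orderEmbOfFin (cardc J)) (ρ0 a) = _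
        rw [hρ0]
        show (((J.1ᶜ).orderIsoOfFin (cardc J)) (((J.1ᶜ).orderIsoOfFin (cardc J)).symm
          ⟨_, hmemc a⟩) : Fin r) = _
        rw [OrderIso.apply_symm_apply]


theorem core {k : Type*} [CommRing k] (C : Matrix (Fin r) (Fin r) k) :
    C.det = ∑ J : T r s, ((Equiv.Perm.sign (eP hsr J) : ℤ) : k) *
      ((C.submatrix (emb J) (fun kk : Fin s => ι hsr (Sum.inl kk))).det *
       (C.submatrix (embc J) (fun a : Fin (r - s) => ι hsr (Sum.inr a))).det) := by
  have hre : ∀ F : Perm (Fin r) → k,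
      ∑ σ : Perm (Fin r), F σ =
        ∑ x : Σ _ : T r s, Perm (Fin s) × Perm (Fin (r - s)), F (E hsr x) := fun F =>
    (Fintype.sum_bijective (E hsr) (E_bijective hsr) _ _ fun x => rfl).symm
  rw [Matrix.det_apply', hre, ← Finset.univ_sigma_univ, Finset.sum_sigma]
  refine Finset.sum_congr rfl fun J _ => ?_
  rw [Fintype.sum_prod_type]
  conv_rhs => rw [Matrix.det_apply', Matrix.det_apply', Finset.sum_mul_sum, Finset.mul_sum]
  refine Finset.sum_congr rfl fun π _ => ?_
  conv_rhs => rw [Finset.mul_sum]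
  refine Finset.sum_congr rfl fun ρ _ => ?_
  have hsign := sign_E hsr ⟨J, (π, ρ)⟩
  have hprod : (∏ i : Fin r, C (E hsr ⟨J, (π, ρ)⟩ i) i)
      = (∏ kk : Fin s, C (emb J (π kk)) (ι hsr (Sum.inl kk))) *
        ∏ a : Fin (r - s), C (embc J (ρ a)) (ι hsr (Sum.inr a)) := by
    rw [← Equiv.prod_comp (ι hsr) (fun i => C (E hsr ⟨J, (π, ρ)⟩ i) i),
      Fintype.prod_sum_type]
    simp only [E_inl, E_inr]
  rw [hprod, hsign]
  simp only [Matrix.submatrix_apply, Units.val_mul, Int.cast_mul]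
  ring


lemma ι_inl_val (k : Fin s) : ((ι hsr (Sum.inl k)) : ℕ) = (k : ℕ) := by
  simp [ι]

lemma ι_inr_val (a : Fin (r - s)) : ((ι hsr (Sum.inr a)) : ℕ) = s + (a : ℕ) := by
  simp [ι]

lemma emb_bot (J : T r s) (hJ : ∀ x : Fin r, x ∈ J.1 ↔ (x : ℕ) < s) (kk : Fin s) :
    emb J kk = ι hsr (Sum.inl kk) := by
  have h := Finset.orderEmbOfFin_unique J.2 (f := fun kk : Fin s => ι hsr (Sum.inl kk))
    (fun kk => (hJ _).mpr (by rw [ι_inl_val]; exact kk.isLt))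
    (fun a b hab => by
      rw [Fin.lt_def, ι_inl_val, ι_inl_val]; exact hab)
  exact (congrFun h kk).symm

lemma embc_bot (J : T r s) (hJ : ∀ x : Fin r, x ∈ J.1 ↔ (x : ℕ) < s) (a : Fin (r - s)) :
    embc J a = ι hsr (Sum.inr a) := by
  have h := Finset.orderEmbOfFin_unique (cardc J) (f := fun a : Fin (r - s) => ι hsr (Sum.inr a))
    (fun a => by
      rw [Finset.mem_compl, hJ, ι_inr_val]
      omega)
    (fun a b hab => by
      rw [Fin.lt_def, ι_inr_val, ι_inr_val]
      exact Nat.add_lt_add_left hab s)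
  exact (congrFun h a).symm

lemma eP_bot (J : T r s) (hJ : ∀ x : Fin r, x ∈ J.1 ↔ (x : ℕ) < s) :
    eP hsr J = 1 := by
  ext x
  obtain ⟨y, rfl⟩ := (ι hsr).surjective x
  rw [eP_apply, Equiv.symm_apply_apply, Equiv.Perm.one_apply]
  cases y with
  | inl kk => rw [sumE_inl, emb_bot hsr J hJ]
  | inr a => rw [sumE_inr, embc_bot hsr J hJ]

lemma sum_bot (J : T r s) (hJ : ∀ x : Fin r, x ∈ J.1 ↔ (x : ℕ) < s) :
    ∑ a ∈ J.1, (a : ℕ) = s * (s - 1) / 2 := by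
  have hsr : s ≤ r := by
    rw [← J.2]
    exact (Finset.card_le_univ J.1).trans (by simp)
  rw [← image_emb J, Finset.sum_image (fun a _ b _ h => emb_inj J h)]
  have hval : ∀ kk : Fin s, ((emb J kk : Fin r) : ℕ) = (kk : ℕ) := fun kk => by
    rw [emb_bot hsr J hJ, ι_inl_val]
  rw [Finset.sum_congr rfl fun kk _ => hval kk]
  rw [Fin.sum_univ_eq_sum_range (fun i => i) s]
  rw [Finset.sum_range_id]

lemma bot_of_no_step (J : T r s)
    (h : ∀ j ∈ J.1, 0 < (j : ℕ) →
      (⟨(j : ℕ) - 1, lt_of_le_of_lt (Nat.sub_le _ _) j.isLt⟩ : Fin r) ∈ J.1) :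
    ∀ x : Fin r, x ∈ J.1 ↔ (x : ℕ) < s := by
  have hdown : ∀ (d : ℕ) (j : Fin r), j ∈ J.1 → ∀ (m : ℕ) (hm : m < r),
      (j : ℕ) = m + d → (⟨m, hm⟩ : Fin r) ∈ J.1 := by
    intro d
    induction d with
    | zero =>
        intro j hj m hm hjm
        have : j = ⟨m, hm⟩ := Fin.ext (show (j : ℕ) = m by omega)
        exact this ▸ hj
    | succ d IH =>
        intro j hj m hm hjm
        have hpos : 0 < (j : ℕ) := by omega
        have hpred := h j hj hpos
        exact IH _ hpred m hm (show (j : ℕ) - 1 = m + d by omega)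
  intro x
  constructor
  · intro hx
    have hsub : Finset.Iic x ⊆ J.1 := by
      intro y hy
      rw [Finset.mem_Iic] at hy
      have : (⟨(y : ℕ), y.isLt⟩ : Fin r) ∈ J.1 :=
        hdown ((x : ℕ) - (y : ℕ)) x hx (y : ℕ) y.isLt (by omega)
      simpa using this
    have := Finset.card_le_card hsub
    rw [Fin.card_Iic, J.2] at this
    omega
  · intro hx
    by_contra hxJ
    have hsub : J.1 ⊆ Finset.Iio x := by
      intro y hy
      rw [Finset.mem_Iio]
      by_contra hxy
      have hle : (x : ℕ) ≤ (y : ℕ) := by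
        rw [not_lt] at hxy
        exact hxy
      have : (⟨(x : ℕ), x.isLt⟩ : Fin r) ∈ J.1 :=
        hdown ((y : ℕ) - (x : ℕ)) y hy (x : ℕ) x.isLt (by omega)
      exact hxJ (by simpa using this)
    have := Finset.card_le_card hsub
    rw [Fin.card_Iio, J.2] at this
    omega

lemma step (J : T r s) (j : Fin r) (hj : j ∈ J.1) (hpos : 0 < (j : ℕ))
    (hj' : (⟨(j : ℕ) - 1, lt_of_le_of_lt (Nat.sub_le _ _) j.isLt⟩ : Fin r) ∉ J.1) :
    ∃ K : T r s, (∑ a ∈ J.1, (a : ℕ)) = (∑ a ∈ K.1, (a : ℕ)) + 1 ∧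
      Equiv.Perm.sign (eP hsr J) = - Equiv.Perm.sign (eP hsr K) := by
  set j' : Fin r := ⟨(j : ℕ) - 1, lt_of_le_of_lt (Nat.sub_le _ _) j.isLt⟩ with hj'def
  have hj'val : (j' : ℕ) = (j : ℕ) - 1 := rfl
  have hj'j : j' ≠ j := by
    rw [Fin.ne_iff_vne, hj'val]
    omega
  have hj'e : j' ∉ J.1.erase j := fun hmem => hj' (Finset.mem_of_mem_erase hmem)
  have hspos : 0 < s := J.2 ▸ Finset.card_pos.mpr ⟨j, hj⟩
  have cardK : (insert j' (J.1.erase j)).card = s := by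
    rw [Finset.card_insert_of_notMem hj'e, Finset.card_erase_of_mem hj, J.2]
    omega
  set K : T r s := ⟨insert j' (J.1.erase j), cardK⟩ with hKdef
  have hjK : j ∉ K.1 := by
    rw [hKdef]
    simp only [Finset.mem_insert, Finset.mem_erase]
    push_neg
    exact ⟨hj'j.symm, fun h => absurd rfl h⟩
  have hj'K : j' ∈ K.1 := Finset.mem_insert_self _ _
  have hmemK : ∀ w : Fin r, w ∈ K.1 → w = j' ∨ (w ∈ J.1 ∧ w ≠ j) := by
    intro w hw
    rcases Finset.mem_insert.mp hw with h | h
    · exact Or.inl h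
    · exact Or.inr ⟨Finset.mem_of_mem_erase h, Finset.ne_of_mem_erase h⟩
  -- the sum relation
  have hsum : (∑ a ∈ J.1, (a : ℕ)) = (∑ a ∈ K.1, (a : ℕ)) + 1 := by
    have h1 : (∑ a ∈ J.1.erase j, (a : ℕ)) + (j : ℕ) = ∑ a ∈ J.1, (a : ℕ) :=
      Finset.sum_erase_add J.1 _ hj
    have h2 : (∑ a ∈ K.1, (a : ℕ)) = (j' : ℕ) + ∑ a ∈ J.1.erase j, (a : ℕ) :=
      Finset.sum_insert hj'e
    rw [hj'val] at h2
    omega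
  -- emb commutation
  have hembJ : ∀ kk : Fin s, emb J kk = Equiv.swap j' j (emb K kk) := by
    have h := Finset.orderEmbOfFin_unique J.2
      (f := fun kk : Fin s => Equiv.swap j' j (emb K kk))
      (fun kk => by
        show Equiv.swap j' j (emb K kk) ∈ J.1
        rcases hmemK _ (emb_mem K kk) with h | ⟨h1, h2⟩
        · rw [h, Equiv.swap_apply_left]; exact hj
        · have hne' : emb K kk ≠ j' := fun he => hj' (he ▸ h1)
          rw [Equiv.swap_apply_of_ne_of_ne hne' h2]; exact h1)
      (fun a b hab => by
        show Equiv.swap j' j (emb K a) < Equiv.swap j' j (emb K b)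
        have huv : emb K a < emb K b := (K.1.orderEmbOfFin K.2).strictMono hab
        have hu := hmemK _ (emb_mem K a)
        have hv := hmemK _ (emb_mem K b)
        have huj : emb K a ≠ j := fun h => hjK (h ▸ emb_mem K a)
        have hvj : emb K b ≠ j := fun h => hjK (h ▸ emb_mem K b)
        rcases eq_or_ne (emb K a) j' with hu' | hu' <;>
          rcases eq_or_ne (emb K b) j' with hv' | hv'
        · exact absurd (hu'.trans hv'.symm) (ne_of_lt huv)
        · rw [hu', Equiv.swap_apply_left, Equiv.swap_apply_of_ne_of_ne hv' hvj, Fin.lt_def]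
          have h1 : (j' : ℕ) < ((emb K b : Fin r) : ℕ) := by
            rw [← hu']; exact huv
          have h2 : ((emb K b : Fin r) : ℕ) ≠ (j : ℕ) := Fin.val_ne_of_ne hvj
          omega
        · rw [hv', Equiv.swap_apply_left, Equiv.swap_apply_of_ne_of_ne hu' huj, Fin.lt_def]
          have h1 : ((emb K a : Fin r) : ℕ) < (j' : ℕ) := by
            rw [← hv']; exact huv
          omega
        · rw [Equiv.swap_apply_of_ne_of_ne hu' huj, Equiv.swap_apply_of_ne_of_ne hv' hvj]
          exact huv)
    exact fun kk => (congrFun h kk).symm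
  have hembcJ : ∀ a : Fin (r - s), embc J a = Equiv.swap j' j (embc K a) := by
    have h := Finset.orderEmbOfFin_unique (cardc J)
      (f := fun a : Fin (r - s) => Equiv.swap j' j (embc K a))
      (fun a => by
        show Equiv.swap j' j (embc K a) ∈ J.1ᶜ
        have hw : embc K a ∉ K.1 := embc_not_mem K a
        have hwj' : embc K a ≠ j' := fun h => hw (h ▸ hj'K)
        rcases eq_or_ne (embc K a) j with hwj | hwj
        · rw [hwj, Equiv.swap_apply_right]
          exact Finset.mem_compl.mpr hj'
        · rw [Equiv.swap_apply_of_ne_of_ne hwj' hwj, Finset.mem_compl]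
          intro hmem
          exact hw (Finset.mem_insert_of_mem (Finset.mem_erase.mpr ⟨hwj, hmem⟩)))
      (fun a b hab => by
        show Equiv.swap j' j (embc K a) < Equiv.swap j' j (embc K b)
        have huv : embc K a < embc K b := ((K.1ᶜ).orderEmbOfFin (cardc K)).strictMono hab
        have hua : embc K a ∉ K.1 := embc_not_mem K a
        have hvb : embc K b ∉ K.1 := embc_not_mem K b
        have hu' : embc K a ≠ j' := fun h => hua (h ▸ hj'K)
        have hv' : embc K b ≠ j' := fun h => hvb (h ▸ hj'K)
        rcases eq_or_ne (embc K a) j with hu | hu <;>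
          rcases eq_or_ne (embc K b) j with hv | hv
        · exact absurd (hu.trans hv.symm) (ne_of_lt huv)
        · rw [hu, Equiv.swap_apply_right, Equiv.swap_apply_of_ne_of_ne hv' hv, Fin.lt_def]
          have h1 : (j : ℕ) < ((embc K b : Fin r) : ℕ) := by
            rw [← hu]; exact huv
          omega
        · rw [hv, Equiv.swap_apply_right, Equiv.swap_apply_of_ne_of_ne hu' hu, Fin.lt_def]
          have h1 : ((embc K a : Fin r) : ℕ) < (j : ℕ) := by
            rw [← hv]; exact huv
          have h2 : ((embc K a : Fin r) : ℕ) ≠ (j' : ℕ) := Fin.val_ne_of_ne hu'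
          omega
        · rw [Equiv.swap_apply_of_ne_of_ne hu' hu, Equiv.swap_apply_of_ne_of_ne hv' hv]
          exact huv)
    exact fun a => (congrFun h a).symm
  have hEq : eP hsr J = Equiv.swap j' j * eP hsr K := by
    ext x
    obtain ⟨y, rfl⟩ := (ι hsr).surjective x
    rw [Equiv.Perm.mul_apply, eP_apply, eP_apply, Equiv.symm_apply_apply]
    cases y with
    | inl kk => rw [sumE_inl, sumE_inl, hembJ]
    | inr a => rw [sumE_inr, sumE_inr, hembcJ]
  refine ⟨K, hsum, ?_⟩
  rw [hEq, Equiv.Perm.sign_mul, Equiv.Perm.sign_swap hj'j, neg_one_mul]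


theorem sign_eP (J : T r s) :
    Equiv.Perm.sign (eP hsr J) = (-1) ^ ((∑ a ∈ J.1, (a : ℕ)) + s * (s - 1) / 2) := by
  suffices H : ∀ n : ℕ, ∀ J : T r s, (∑ a ∈ J.1, (a : ℕ)) = n →
      Equiv.Perm.sign (eP hsr J) = (-1) ^ (n + s * (s - 1) / 2) from H _ J rfl
  intro n
  induction n using Nat.strong_induction_on with
  | _ n IH =>
    intro J hn
    by_cases hstep : ∃ j ∈ J.1, 0 < (j : ℕ) ∧
        (⟨(j : ℕ) - 1, lt_of_le_of_lt (Nat.sub_le _ _) j.isLt⟩ : Fin r) ∉ J.1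
    · obtain ⟨j, hj, hpos, hj'⟩ := hstep
      obtain ⟨K, hsum, hsign⟩ := step hsr J j hj hpos hj'
      have hK : (∑ a ∈ K.1, (a : ℕ)) = n - 1 := by omega
      rw [hsign, IH (n - 1) (by omega) K hK]
      have he : n + s * (s - 1) / 2 = (n - 1 + s * (s - 1) / 2) + 1 := by omega
      rw [he, pow_succ, mul_neg_one]
    · push_neg at hstep
      have hJ := bot_of_no_step J hstep
      have hc := sum_bot J hJ
      have hnc : n = s * (s - 1) / 2 := by omega
      rw [eP_bot hsr J hJ, hnc, Equiv.Perm.sign_one, ← two_mul, pow_mul, neg_one_sq, one_pow]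

theorem main {k : Type*} [CommRing k] (hZZ : s ≤ r) (A : Matrix (Fin r) (Fin r) k) (I L : T r s) :
    ∑ J : T r s,
      (-1 : k) ^ ((∑ a ∈ L.1, (a : ℕ)) + ∑ a ∈ J.1, (a : ℕ)) *
        ((A.submatrix (emb I) (emb J)).det * (A.submatrix (embc L) (embc J)).det)
      = if I = L then A.det else 0 := by
  classical
  set B : Matrix (Fin r) (Fin r) k :=
    A.submatrix (Sum.elim (emb I) (embc L) ∘ (ι hZZ).symm) id with hB
  have hcore := core hZZ (Bᵀ)
  have hdet : B.det = ∑ J : T r s, ((Equiv.Perm.sign (eP hZZ J) : ℤ) : k) *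
      ((A.submatrix (emb I) (emb J)).det * (A.submatrix (embc L) (embc J)).det) := by
    rw [← Matrix.det_transpose B, hcore]
    refine Finset.sum_congr rfl fun J _ => ?_
    congr 1
    congr 1
    · rw [← Matrix.transpose_submatrix, Matrix.det_transpose]
      congr 1
      ext i j'
      simp [hB, Matrix.submatrix_apply]
    · rw [← Matrix.transpose_submatrix, Matrix.det_transpose]
      congr 1
      ext i j'
      simp [hB, Matrix.submatrix_apply]
  have hsgn : ∀ J : T r s,
      (-1 : k) ^ ((∑ a ∈ L.1, (a : ℕ)) + ∑ a ∈ J.1, (a : ℕ)) =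
        ((Equiv.Perm.sign (eP hZZ L) : ℤ) : k) * ((Equiv.Perm.sign (eP hZZ J) : ℤ) : k) := by
    intro J
    rw [sign_eP hZZ L, sign_eP hZZ J]
    simp only [Units.val_pow_eq_pow_val, Units.val_neg, Units.val_one, Int.cast_pow,
      Int.cast_neg, Int.cast_one]
    rw [← pow_add]
    have he : ((∑ a ∈ L.1, (a : ℕ)) + s * (s - 1) / 2) +
        ((∑ a ∈ J.1, (a : ℕ)) + s * (s - 1) / 2) =
        ((∑ a ∈ L.1, (a : ℕ)) + ∑ a ∈ J.1, (a : ℕ)) + 2 * (s * (s - 1) / 2) := by ring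
    rw [he]
    conv_rhs => rw [pow_add, pow_mul, neg_one_sq, one_pow, mul_one]
  calc ∑ J : T r s,
      (-1 : k) ^ ((∑ a ∈ L.1, (a : ℕ)) + ∑ a ∈ J.1, (a : ℕ)) *
        ((A.submatrix (emb I) (emb J)).det * (A.submatrix (embc L) (embc J)).det)
      = ∑ J : T r s, ((Equiv.Perm.sign (eP hZZ L) : ℤ) : k) *
          (((Equiv.Perm.sign (eP hZZ J) : ℤ) : k) *
            ((A.submatrix (emb I) (emb J)).det * (A.submatrix (embc L) (embc J)).det)) :=
        Finset.sum_congr rfl fun J _ => by rw [hsgn J, mul_assoc]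
    _ = ((Equiv.Perm.sign (eP hZZ L) : ℤ) : k) * B.det := by
        rw [← Finset.mul_sum, ← hdet]
    _ = if I = L then A.det else 0 := by
        by_cases hIL : I = L
        · subst hIL
          rw [if_pos rfl]
          have hBL : B = A.submatrix (⇑(eP hZZ I)) id := rfl
          rw [hBL, Matrix.det_permute, ← mul_assoc]
          have hone : ((Equiv.Perm.sign (eP hZZ I) : ℤ) : k) *
              ((Equiv.Perm.sign (eP hZZ I) : ℤ) : k) = 1 := by
            rcases Int.units_eq_one_or (Equiv.Perm.sign (eP hZZ I)) with h | h <;>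
              rw [h] <;> norm_num
          rw [hone, one_mul]
        · rw [if_neg hIL]
          have hx : ∃ x, x ∈ I.1 ∧ x ∉ L.1 := by
            rcases Finset.not_subset.mp (fun hsub => hIL (Subtype.ext
              (Finset.eq_of_subset_of_card_le hsub (by rw [I.2, L.2])))) with ⟨x, hx1, hx2⟩
            exact ⟨x, hx1, hx2⟩
          obtain ⟨x, hxI, hxL⟩ := hx
          obtain ⟨kk, _, hkk⟩ := Finset.mem_image.mp ((image_emb I).symm ▸ hxI)
          have hxLc : x ∈ L.1ᶜ := Finset.mem_compl.mpr hxL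
          obtain ⟨a, _, ha⟩ := Finset.mem_image.mp ((image_embc L).symm ▸ hxLc)
          have hzero : B.det = 0 := by
            apply Matrix.det_zero_of_row_eq
              (i := ι hZZ (Sum.inl kk)) (j := ι hZZ (Sum.inr a))
            · exact fun h => Sum.inl_ne_inr ((ι hZZ).injective h)
            · funext z
              simp only [hB, Matrix.submatrix_apply, Function.comp_apply,
                Equiv.symm_apply_apply, Sum.elim_inl, Sum.elim_inr, id_eq]
              rw [hkk, ha]
          rw [hzero, mul_zero]

end Stmt3Aux

end Stmt3AuxSection

/-- generalized Laplace expansion along `s` rows, including the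
alien-cofactor case: for an `r×r` matrix `A`, `1 ≤ s ≤ r`, and `I, L ∈ I_{s,r}`,
`Σ_{J ∈ I_{s,r}} (−1)^{τ(L)+τ(J)} A{I; J} · A[L; J]` equals `det A` if `I = L` and `0`
otherwise.  Here `A{I; J}` is the `s×s` minor with rows `I` and columns `J`, `A[L; J]`
is the complementary `(r−s)×(r−s)` minor obtained by deleting rows `L` and columns `J`,
and `τ(I)` is the sum of the entries of `I` (the parity of `τ(L)+τ(J)` is unaffected by
the choice of 0- or 1-indexing). -/
theorem stmt3 {k : Type*} [Field k] (r s : ℕ) (hs : 1 ≤ s) (hsr : s ≤ r)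
    (A : Matrix (Fin r) (Fin r) k)
    (I L : {S : Finset (Fin r) // S.card = s}) :
    ∑ J : {S : Finset (Fin r) // S.card = s},
      (-1 : k) ^ ((∑ a ∈ L.1, (a : ℕ)) + ∑ a ∈ J.1, (a : ℕ)) *
        ((A.submatrix (fun a => (I.1.orderIsoOfFin I.2 a : Fin r))
                      (fun a => (J.1.orderIsoOfFin J.2 a : Fin r))).det *
         (A.submatrix
            (fun a : Fin (r - s) =>
              ((L.1ᶜ).orderIsoOfFin (by rw [Finset.card_compl, L.2, Fintype.card_fin]) a : Fin r))
            (fun a : Fin (r - s) =>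
              ((J.1ᶜ).orderIsoOfFin (by rw [Finset.card_compl, J.2, Fintype.card_fin]) a : Fin r))).det)
      = if I = L then A.det else 0 := by
  exact Stmt3Aux.main hsr A I L
end

section
/- Let k be a field, n ≥ 1, d ≥ 3, and M = (x_{a,b}) a 2n×d matrix over k. Fix i = (i_1 < … < i_{d−2}) ∈ I_{d−2,2n}. For 1 ≤ t ≤ n let R(i,t) be the d×d matrix whose rows, in order, are rows i_1, …, i_{d−2}, t, n+t of M (so det R(i,t) = 0 whenever t or n+t occurs among the i_l). For 1 ≤ j_1 < j_2 ≤ d set M(j_1,j_2) = Σ_{t=1}^n (x_{t,j_1} x_{n+t,j_2} − x_{n+t,j_1} x_{t,j_2}) and let D(i,j_1,j_2) be the determinant of the (d−2)×(d−2) submatrix of M with rows i_1,…,i_{d−2} and all columns except j_1 and j_2. Then Σ_{t=1}^n det R(i,t) = Σ_{1 ≤ j_1 < j_2 ≤ d} (−1)^{j_1+j_2+1} M(j_1,j_2) · D(i,j_1,j_2). -/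
open Matrix BigOperators

/-- The standard symplectic matrix `J = [[0, -Iₙ],[Iₙ, 0]]` of size `2n × 2n`. -/
def Jmat (k : Type*) [Field k] (n : ℕ) : Matrix (Fin (2*n)) (Fin (2*n)) k :=
  Matrix.of fun a b => if a.1 + n = b.1 then (-1 : k) else if b.1 + n = a.1 then 1 else 0

/-- A subspace `U ⊆ k^{2n}` is isotropic if `uᵀ J w = 0` for all `u, w ∈ U`. -/
def IsIsotropic (k : Type*) [Field k] (n : ℕ) (U : Submodule k (Fin (2*n) → k)) : Prop :=
  ∀ u ∈ U, ∀ w ∈ U, u ⬝ᵥ (Jmat k n).mulVec w = 0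

/-- `Kspace k n a` is the subspace `K_a` (with `a` a 1-indexed index in `{0,…,2n}`):
`K_0 = 0`, `K_a = span(e_1,…,e_a)` for `1 ≤ a ≤ n`, and
`K_{n+i} = span(e_1,…,e_n, e_{n+i},…,e_{2n})` for `1 ≤ i ≤ n`. -/
def Kspace (k : Type*) [Field k] (n : ℕ) (a : ℕ) : Submodule k (Fin (2*n) → k) :=
  Submodule.span k
    {v | ∃ p : Fin (2*n), ((p.1 < a ∧ p.1 < n) ∨ (n < a ∧ a ≤ p.1 + 1)) ∧ v = Pi.single p 1}

/-- `σ` on 1-indexed `{1,…,2n}`: `σ(a) = a-1` for `a ≤ n`, `σ(a) = a+1` for `n < a < 2n`,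
`σ(2n) = n`. -/
def sigmaFn (n a : ℕ) : ℕ := if a ≤ n then a - 1 else if a < 2*n then a + 1 else n

/-- Membership in `\overline{I}^{Sp}_{d,2n}` (0-indexed entries): a `d`-tuple of pairwise
distinct elements of `Fin (2n)` such that for some `r ≤ d`, the first `r` entries are
strictly increasing with (1-indexed) values `≤ n` and the remaining entries are strictly
decreasing with (1-indexed) values `> n`. -/
def IsSpBarTuple (n : ℕ) {d : ℕ} (i : Fin d → Fin (2*n)) : Prop :=
  Function.Injective i ∧ ∃ r ≤ d,
    (∀ a b : Fin d, a < b → b.1 < r → i a < i b) ∧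
    (∀ a : Fin d, a.1 < r → (i a).1 < n) ∧
    (∀ a b : Fin d, a < b → r ≤ a.1 → i b < i a) ∧
    (∀ a : Fin d, r ≤ a.1 → n ≤ (i a).1)

/-- Membership in `I^{Sp}_{d,2n}`: a tuple of `\overline{I}^{Sp}_{d,2n}` whose entries
contain no pair `{t, n+t}`. -/
def IsSpTuple (n : ℕ) {d : ℕ} (i : Fin d → Fin (2*n)) : Prop :=
  IsSpBarTuple n i ∧ ∀ a b : Fin d, (i b).1 ≠ (i a).1 + n

/-- The order `i ≥^{Sp} j`: for every `t`, `i_t ≥ j_t` if `j_t ≤ n` (1-indexed), and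
`n < i_t ≤ j_t` if `j_t > n`. -/
def spGE (n : ℕ) {d : ℕ} (i j : Fin d → Fin (2*n)) : Prop :=
  ∀ t : Fin d, if (j t).1 < n then j t ≤ i t else (n ≤ (i t).1 ∧ i t ≤ j t)

/-- The coordinate subspace `e_i = span(e_{i_1},…,e_{i_d})`. -/
def eSpan (k : Type*) [Field k] {n d : ℕ} (i : Fin d → Fin (2*n)) :
    Submodule k (Fin (2*n) → k) :=
  Submodule.span k (Set.range fun t => Pi.single (i t) (1 : k))

/-- The Borel subgroup `B` of `Sp_{2n}(k)`: symplectic matrices of block form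
`[[A, B'],[0, D]]` with `A` upper triangular. -/
def inB (k : Type*) [Field k] (n : ℕ) (M : Matrix (Fin (2*n)) (Fin (2*n)) k) : Prop :=
  Mᵀ * Jmat k n * M = Jmat k n ∧
  ∀ a b : Fin (2*n), ((n ≤ a.1 ∧ b.1 < n) ∨ (a.1 < n ∧ b.1 < n ∧ b.1 < a.1)) → M a b = 0

/-- The opposite Borel subgroup `B⁻` of `Sp_{2n}(k)`: symplectic matrices of block form
`[[A, 0],[C, D]]` with `A` lower triangular. -/
def inBminus (k : Type*) [Field k] (n : ℕ) (M : Matrix (Fin (2*n)) (Fin (2*n)) k) : Prop :=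
  Mᵀ * Jmat k n * M = Jmat k n ∧
  ∀ a b : Fin (2*n), ((a.1 < n ∧ n ≤ b.1) ∨ (a.1 < n ∧ b.1 < n ∧ a.1 < b.1)) → M a b = 0

/-- The Plücker coordinate `p_S(M)`: determinant of the `d×d` submatrix of `M` formed by
the rows in `S` taken in increasing order (and `0` if `S` does not have `d` elements). -/
def pluckerS {k : Type*} [Field k] {n d : ℕ} (M : Matrix (Fin (2*n)) (Fin d) k)
    (S : Finset (Fin (2*n))) : k :=
  if hS : S.card = d then
    (M.submatrix (fun a => (S.orderIsoOfFin hS a : Fin (2*n))) id).det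
  else 0

/-- The Plücker coordinate attached to the underlying set of a tuple `j`. -/
def pluckerT {k : Type*} [Field k] {n d : ℕ} (M : Matrix (Fin (2*n)) (Fin d) k)
    (j : Fin d → Fin (2*n)) : k :=
  pluckerS M (Finset.image j Finset.univ)

/-- The row-selection function for `R(i,t)`: rows `i_1, …, i_{d-2}, t, n+t` in order. -/
def rowsFn {n : ℕ} (d : ℕ) (i : Fin (d-2) → Fin (2*n)) (t : Fin n) : Fin d → Fin (2*n) :=
  fun l =>
    if h : l.1 < d - 2 then i ⟨l.1, h⟩
    else if l.1 = d - 2 then ⟨t.1, by have := t.2; omega⟩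
    else ⟨n + t.1, by have := t.2; omega⟩

/-- The column-selection function enumerating, in increasing order, the columns of a
`2n × d` matrix other than `j1 < j2`. -/
def colSkip (d : ℕ) (j1 j2 : Fin d) (c : Fin (d-2)) : Fin d :=
  if c.1 < j1.1 then ⟨c.1, by have := c.2; omega⟩
  else if c.1 + 1 < j2.1 then ⟨c.1 + 1, by have := c.2; omega⟩
  else ⟨c.1 + 2, by have := c.2; omega⟩

/-- Membership of a subspace `U` in the Richardson variety `R(u,v)` of `Sp_{2n}(k)/P_d`:
`U` is a `d`-dimensional isotropic subspace with `dim(U ∩ K_{u_t}) ≥ t` and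
`dim(U ∩ K_{σ(v_t)}) ≤ t-1` for all `1 ≤ t ≤ d`. -/
def inRich (k : Type*) [Field k] (n : ℕ) {d : ℕ} (u v : Fin d → Fin (2*n))
    (U : Submodule k (Fin (2*n) → k)) : Prop :=
  IsIsotropic k n U ∧ Module.finrank k U = d ∧
  ∀ t : Fin d,
    t.1 + 1 ≤ Module.finrank k ↥(U ⊓ Kspace k n ((u t).1 + 1)) ∧
    Module.finrank k ↥(U ⊓ Kspace k n (sigmaFn n ((v t).1 + 1))) ≤ t.1


section Aux
variable {k : Type*} [CommRing k]

lemma negpow_congr (x y : ℕ) (h : x % 2 = y % 2) : (-1:k)^x = (-1:k)^y := by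
  conv_lhs => rw [← Nat.div_add_mod x 2]
  conv_rhs => rw [← Nat.div_add_mod y 2]
  rw [pow_add, pow_add, pow_mul, pow_mul]
  norm_num [h]



lemma colSkip_val (d : ℕ) (j1 j2 : Fin d) (c : Fin (d-2)) :
    (colSkip d j1 j2 c).1 =
      if c.1 < j1.1 then c.1 else if c.1 + 1 < j2.1 then c.1 + 1 else c.1 + 2 := by
  rw [colSkip]
  split_ifs <;> rfl

lemma val_succAbove' {m : ℕ} (p : Fin (m+1)) (i : Fin m) :
    (p.succAbove i : ℕ) = if i.1 < p.1 then i.1 else i.1 + 1 := by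
  rw [Fin.succAbove]
  split_ifs with h1 h2 h2 <;>
    simp_all [Fin.lt_def, Fin.castSucc, Fin.succ, Fin.castAdd, Fin.castLE]

lemma succAbove_comp (m : ℕ) (a : Fin (m+2)) (j' : Fin (m+1)) (c : Fin ((m+2)-2)) :
    a.succAbove (j'.succAbove c) =
      colSkip (m+2) (if a.succAbove j' < a then a.succAbove j' else a)
        (if a.succAbove j' < a then a else a.succAbove j') c := by
  have h1 := val_succAbove' j' c
  have h2 := val_succAbove' a (j'.succAbove c)
  have h3 := val_succAbove' a j'
  apply Fin.ext
  rw [h2, colSkip_val]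
  simp only [apply_ite Fin.val, Fin.lt_def, h1, h3]
  split_ifs <;> omega

lemma two_row (m : ℕ) (A : Matrix (Fin (m+2)) (Fin (m+2)) k) :
    A.det = ∑ j1 : Fin (m+2), ∑ j2 : Fin (m+2), if j1 < j2 then
      (-1:k)^(j1.1+j2.1+1) *
        (A ⟨m, by omega⟩ j1 * A ⟨m+1, by omega⟩ j2
          - A ⟨m+1, by omega⟩ j1 * A ⟨m, by omega⟩ j2) *
      (A.submatrix (fun c : Fin ((m+2)-2) => (⟨c.1, by have := c.2; omega⟩ : Fin (m+2)))
        (colSkip (m+2) j1 j2)).det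
    else 0 := by
  set rr : Fin ((m+2)-2) → Fin (m+2) := fun c => ⟨c.1, by have := c.2; omega⟩ with hrr
  set F : Fin (m+2) → Fin (m+2) → k := fun a b =>
    (if b < a then (-1:k)^(a.1+b.1+1) else (-1:k)^(a.1+b.1)) *
      (A ⟨m+1, by omega⟩ a * A ⟨m, by omega⟩ b) *
      (A.submatrix rr (colSkip (m+2) (if b < a then b else a)
        (if b < a then a else b))).det with hF
  have e1 : A.det = ∑ a : Fin (m+2), ∑ j' : Fin (m+1), F a (a.succAbove j') := by
    rw [Matrix.det_succ_row A (Fin.last (m+1))]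
    refine Finset.sum_congr rfl fun a _ => ?_
    rw [Matrix.det_succ_row _ (Fin.last m), Finset.mul_sum]
    refine Finset.sum_congr rfl fun j' _ => ?_
    have hsub : ((A.submatrix (Fin.last (m+1)).succAbove a.succAbove).submatrix
        (Fin.last m).succAbove j'.succAbove) =
        A.submatrix rr (colSkip (m+2) (if a.succAbove j' < a then a.succAbove j' else a)
          (if a.succAbove j' < a then a else a.succAbove j')) := by
      rw [Matrix.submatrix_submatrix, Fin.succAbove_last, Fin.succAbove_last]
      ext r c
      simp only [Matrix.submatrix_apply, Function.comp_apply]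
      have hr : (Fin.castSucc (Fin.castSucc r)) = rr r := Fin.ext rfl
      have hc : a.succAbove (j'.succAbove c) =
          colSkip (m+2) (if a.succAbove j' < a then a.succAbove j' else a)
            (if a.succAbove j' < a then a else a.succAbove j') c := succAbove_comp m a j' c
      rw [hr, hc]
    rw [hsub]
    have hrow : (A.submatrix (Fin.last (m+1)).succAbove a.succAbove) (Fin.last m) j'
        = A ⟨m, by omega⟩ (a.succAbove j') := by
      rw [Matrix.submatrix_apply, Fin.succAbove_last]
      congr 1
    have hsign : (-1:k)^((Fin.last (m+1)).1 + a.1) * (-1:k)^((Fin.last m).1 + j'.1)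
        = (if a.succAbove j' < a then (-1:k)^(a.1+(a.succAbove j').1+1)
            else (-1:k)^(a.1+(a.succAbove j').1)) := by
      have hb := val_succAbove' a j'
      rw [← pow_add, Fin.val_last, Fin.val_last]
      by_cases hlt : a.succAbove j' < a
      · rw [if_pos hlt]
        rw [Fin.lt_def] at hlt
        refine negpow_congr _ _ ?_
        split_ifs at hb <;> omega
      · rw [if_neg hlt]
        rw [Fin.lt_def, not_lt] at hlt
        refine negpow_congr _ _ ?_
        split_ifs at hb <;> omega
    have hlastA : A (Fin.last (m+1)) a = A ⟨m+1, by omega⟩ a := by congr 1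
    rw [hrow, hlastA, hF]
    simp only []
    rw [← hsign]
    ring_nf
  rw [e1]
  have e2 : ∀ a : Fin (m+2), ∑ j' : Fin (m+1), F a (a.succAbove j')
      = ∑ b : Fin (m+2), if b = a then 0 else F a b := by
    intro a
    rw [Fin.sum_univ_succAbove (fun b => if b = a then 0 else F a b) a]
    simp [Fin.succAbove_ne]
  rw [Finset.sum_congr rfl fun a _ => e2 a]
  have e3 : ∀ a b : Fin (m+2), (if b = a then 0 else F a b)
      = (if a < b then F a b else 0) + (if b < a then F a b else 0) := by
    intro a b
    rcases lt_trichotomy a b with h | h | h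
    · simp [h, asymm h, (h.ne' : b ≠ a)]
    · subst h; simp
    · simp [h, asymm h, h.ne]
  simp_rw [e3, Finset.sum_add_distrib]
  have e4 : (∑ a : Fin (m+2), ∑ b : Fin (m+2), if b < a then F a b else 0)
      = ∑ j1 : Fin (m+2), ∑ j2 : Fin (m+2), if j1 < j2 then F j2 j1 else 0 :=
    Finset.sum_comm
  rw [e4, ← Finset.sum_add_distrib]
  refine Finset.sum_congr rfl fun j1 _ => ?_
  rw [← Finset.sum_add_distrib]
  refine Finset.sum_congr rfl fun j2 _ => ?_
  by_cases h : j1 < j2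
  · rw [if_pos h, if_pos h, if_pos h, hF]
    simp only [if_neg (asymm h), if_pos h]
    have hs : (-1:k)^(j2.1+j1.1+1) = -(-1:k)^(j1.1+j2.1) := by
      rw [pow_succ, Nat.add_comm j2.1 j1.1]; ring
    have hs2 : (-1:k)^(j1.1+j2.1+1) = -(-1:k)^(j1.1+j2.1) := by
      rw [pow_succ]; ring
    rw [hs, hs2]
    ring
  · rw [if_neg h, if_neg h, if_neg h, add_zero]

end Aux

/-- for a `2n×d` matrix `M` (`d ≥ 3`, `n ≥ 1`) and a strictly increasing
`(d−2)`-tuple `i` of rows, `Σ_{t=1}^n det R(i,t)`, where `R(i,t)` has rows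
`i_1,…,i_{d−2}, t, n+t` of `M` in order, equals
`Σ_{1 ≤ j1 < j2 ≤ d} (−1)^{j1+j2+1} M(j1,j2) · D(i,j1,j2)`, where
`M(j1,j2) = Σ_{t=1}^n (x_{t,j1} x_{n+t,j2} − x_{n+t,j1} x_{t,j2})` and `D(i,j1,j2)` is the
`(d−2)×(d−2)` minor of `M` with rows `i` and all columns except `j1, j2`. -/

theorem stmt4 {k : Type*} [Field k] (n d : ℕ) (hn : 1 ≤ n) (hd : 3 ≤ d)
    (M : Matrix (Fin (2*n)) (Fin d) k)
    (i : Fin (d-2) → Fin (2*n)) (hi : StrictMono i) :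
    ∑ t : Fin n, (M.submatrix (rowsFn d i t) id).det =
      ∑ j1 : Fin d, ∑ j2 : Fin d, if j1 < j2 then
        (-1 : k) ^ (j1.1 + j2.1 + 1) *
          (∑ t : Fin n,
            (M ⟨t.1, by have := t.2; omega⟩ j1 * M ⟨n + t.1, by have := t.2; omega⟩ j2
              - M ⟨n + t.1, by have := t.2; omega⟩ j1 * M ⟨t.1, by have := t.2; omega⟩ j2)) *
          (M.submatrix i (colSkip d j1 j2)).det
      else 0 := by
  obtain ⟨m, rfl⟩ : ∃ m, d = m + 2 := ⟨d - 2, by omega⟩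
  have step : ∀ t : Fin n, (M.submatrix (rowsFn (m+2) i t) id).det =
      ∑ j1 : Fin (m+2), ∑ j2 : Fin (m+2), if j1 < j2 then
        (-1 : k) ^ (j1.1 + j2.1 + 1) *
          (M ⟨t.1, by have := t.2; omega⟩ j1 * M ⟨n + t.1, by have := t.2; omega⟩ j2
            - M ⟨n + t.1, by have := t.2; omega⟩ j1 * M ⟨t.1, by have := t.2; omega⟩ j2) *
          (M.submatrix i (colSkip (m+2) j1 j2)).det
      else 0 := by
    intro t
    rw [two_row m (M.submatrix (rowsFn (m+2) i t) id)]
    refine Finset.sum_congr rfl fun j1 _ => Finset.sum_congr rfl fun j2 _ => ?_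
    by_cases h : j1 < j2
    · rw [if_pos h, if_pos h]
      have hm : rowsFn (m+2) i t ⟨m, by omega⟩ = ⟨t.1, by have := t.2; omega⟩ := by
        rw [rowsFn, dif_neg (show ¬ (m < m+2-2) by omega)]
        rw [if_pos (show m = m+2-2 by omega)]
      have hm1 : rowsFn (m+2) i t ⟨m+1, by omega⟩ = ⟨n + t.1, by have := t.2; omega⟩ := by
        rw [rowsFn, dif_neg (show ¬ (m+1 < m+2-2) by omega)]
        rw [if_neg (show ¬ (m+1 = m+2-2) by omega)]
      have hrows : (M.submatrix (rowsFn (m+2) i t) id).submatrix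
          (fun c : Fin ((m+2)-2) => (⟨c.1, by have := c.2; omega⟩ : Fin (m+2)))
          (colSkip (m+2) j1 j2) = M.submatrix i (colSkip (m+2) j1 j2) := by
        ext r c
        simp only [Matrix.submatrix_apply, id_eq]
        have hr : rowsFn (m+2) i t ⟨r.1, by have := r.2; omega⟩ = i r := by
          rw [rowsFn, dif_pos (show r.1 < m+2-2 from r.2)]
        rw [hr]
      simp only [Matrix.submatrix_apply, id_eq, hm, hm1, hrows]
    · rw [if_neg h, if_neg h]
  rw [Finset.sum_congr rfl fun t _ => step t, Finset.sum_comm]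
  refine Finset.sum_congr rfl fun j1 _ => ?_
  rw [Finset.sum_comm]
  refine Finset.sum_congr rfl fun j2 _ => ?_
  by_cases h : j1 < j2
  · simp only [if_pos h]
    rw [Finset.mul_sum, Finset.sum_mul]
  · simp [h]
end

section
/- Let k be an algebraically closed field, 2 ≤ d ≤ n, and let u, v ∈ I^{Sp}_{d,2n} with u ≥^{Sp} v. Let M be a 2n×d matrix over k of rank d whose column span U satisfies dim(U ∩ K_{u_t}) ≥ t and dim(U ∩ K_{σ(v_t)}) ≤ t−1 for all 1 ≤ t ≤ d (i.e. U lies in the corresponding Richardson variety of the Grassmannian). Then U is isotropic — equivalently U belongs to the Richardson variety R(u,v) of Sp_{2n}(k)/P_d — if and only if: when d = 2, Σ_{t=1}^n (x_{t,1} x_{n+t,2} − x_{n+t,1} x_{t,2}) = 0 where M = (x_{a,b}); and when d ≥ 3, for every i = (i_1 < … < i_{d−2}) ∈ I_{d−2,2n} one has Σ_{t=1}^n det R(i,t) = 0, where R(i,t) is the d×d matrix whose rows, in order, are rows i_1, …, i_{d−2}, t, n+t of M (det R(i,t) = 0 whenever t or n+t occurs among the i_l). -/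
open Matrix BigOperators

namespace Stmt7
variable {k : Type*} [Field k]

def sb {n d : ℕ} (M : Matrix (Fin (2*n)) (Fin d) k) (a b : Fin d) : k :=
  ∑ t : Fin n, M ⟨t.1, by have := t.2; omega⟩ a * M ⟨n + t.1, by have := t.2; omega⟩ b

lemma sum_split {n : ℕ} (f : Fin (2*n) → k) :
    ∑ s, f s = (∑ t : Fin n, f ⟨t.1, by have := t.2; omega⟩)
      + ∑ t : Fin n, f ⟨n + t.1, by have := t.2; omega⟩ := by
  rw [← Equiv.sum_comp ((finSumFinEquiv (m := n) (n := n)).trans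
    (finCongr (by omega : n + n = 2*n))) f, Fintype.sum_sum_type]
  congr 1

lemma jmulL' {n d : ℕ} (M : Matrix (Fin (2*n)) (Fin d) k) (t : Fin n) (b : Fin d) :
    ((Jmat k n) * M) ⟨t.1, by have := t.2; omega⟩ b
      = -(M ⟨n + t.1, by have := t.2; omega⟩ b) := by
  rw [Matrix.mul_apply]
  rw [Finset.sum_eq_single (⟨n + t.1, by have := t.2; omega⟩ : Fin (2*n))]
  · simp [Jmat]; intro h; omega
  · intro r _ hr
    have hr2 := r.2
    have h1 : ¬ ((t.1 : ℕ) + n = r.1) := fun h => hr (by simp [Fin.ext_iff]; omega)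
    have ht := t.2
    simp only [Jmat, Matrix.of_apply, if_neg h1, if_neg (by omega : ¬ (r.1 + n = t.1)),
      zero_mul]
  · simp

lemma jmulR' {n d : ℕ} (M : Matrix (Fin (2*n)) (Fin d) k) (t : Fin n) (b : Fin d) :
    ((Jmat k n) * M) ⟨n + t.1, by have := t.2; omega⟩ b
      = M ⟨t.1, by have := t.2; omega⟩ b := by
  rw [Matrix.mul_apply]
  rw [Finset.sum_eq_single (⟨t.1, by have := t.2; omega⟩ : Fin (2*n))]
  · have ht := t.2
    simp only [Jmat, Matrix.of_apply]
    rw [if_neg (by omega), if_pos (by omega), one_mul]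
  · intro r _ hr
    have hr2 := r.2
    have ht := t.2
    have h2 : ¬ (r.1 + n = n + t.1) := fun h => hr (by simp [Fin.ext_iff]; omega)
    simp only [Jmat, Matrix.of_apply, if_neg (by omega : ¬ (n + t.1 + n = r.1)), if_neg h2,
      zero_mul]
  · simp

lemma qm_apply {n d : ℕ} (M : Matrix (Fin (2*n)) (Fin d) k) (a b : Fin d) :
    (Mᵀ * Jmat k n * M) a b = sb M b a - sb M a b := by
  rw [Matrix.mul_assoc, Matrix.mul_apply]
  rw [sum_split (fun s => Mᵀ a s * (Jmat k n * M) s b)]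
  have e1 : ∀ t : Fin n, (fun s => Mᵀ a s * (Jmat k n * M) s b)
      (⟨t.1, by have := t.2; omega⟩ : Fin (2*n))
      = -(M ⟨t.1, by have := t.2; omega⟩ a * M ⟨n + t.1, by have := t.2; omega⟩ b) := by
    intro t
    simp only [Matrix.transpose_apply]
    rw [jmulL']
    ring
  have e2 : ∀ t : Fin n, (fun s => Mᵀ a s * (Jmat k n * M) s b)
      (⟨n + t.1, by have := t.2; omega⟩ : Fin (2*n))
      = M ⟨t.1, by have := t.2; omega⟩ b * M ⟨n + t.1, by have := t.2; omega⟩ a := by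
    intro t
    simp only [Matrix.transpose_apply]
    rw [jmulR']
    ring
  rw [Finset.sum_congr rfl (fun t _ => e1 t), Finset.sum_congr rfl (fun t _ => e2 t)]
  have hsb1 : sb M a b = ∑ t : Fin n,
      M ⟨t.1, by have := t.2; omega⟩ a * M ⟨n + t.1, by have := t.2; omega⟩ b := rfl
  have hsb2 : sb M b a = ∑ t : Fin n,
      M ⟨t.1, by have := t.2; omega⟩ b * M ⟨n + t.1, by have := t.2; omega⟩ a := rfl
  rw [hsb1, hsb2, Finset.sum_neg_distrib]
  ring

lemma dot_eq {n d : ℕ} (M : Matrix (Fin (2*n)) (Fin d) k) (c c' : Fin d → k) :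
    (M.mulVec c) ⬝ᵥ (Jmat k n).mulVec (M.mulVec c')
      = c ᵥ* (Mᵀ * Jmat k n * M) ⬝ᵥ c' := by
  rw [Matrix.mulVec_mulVec, Matrix.dotProduct_mulVec]
  congr 1
  rw [← Matrix.vecMul_transpose, Matrix.vecMul_vecMul, Matrix.mul_assoc]

lemma iso_iff {n d : ℕ} (M : Matrix (Fin (2*n)) (Fin d) k) :
    IsIsotropic k n (LinearMap.range M.mulVecLin) ↔
      ∀ a b : Fin d, (Mᵀ * Jmat k n * M) a b = 0 := by
  constructor
  · intro h a b
    have := h (M.mulVec (Pi.single a 1)) ⟨Pi.single a 1, rfl⟩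
      (M.mulVec (Pi.single b 1)) ⟨Pi.single b 1, rfl⟩
    rw [dot_eq] at this
    simpa using this
  · intro h u hu w hw
    obtain ⟨c, rfl⟩ := hu
    obtain ⟨c', rfl⟩ := hw
    have hM : Mᵀ * Jmat k n * M = 0 := by ext a b; exact h a b
    simp only [Matrix.mulVecLin_apply]
    rw [dot_eq, hM]
    simp

lemma iso_iff' {n d : ℕ} (M : Matrix (Fin (2*n)) (Fin d) k) :
    IsIsotropic k n (LinearMap.range M.mulVecLin) ↔
      ∀ a b : Fin d, sb M a b = sb M b a := by
  rw [iso_iff]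
  constructor
  · intro h a b
    have := h a b
    rw [qm_apply] at this
    linear_combination -this
  · intro h a b
    rw [qm_apply, h a b]
    ring

def matE {n : ℕ} (d : ℕ) (M : Matrix (Fin (2*n)) (Fin d) k)
    (r : Fin (d-2) → Fin d → k) (t : Fin n) : Matrix (Fin d) (Fin d) k :=
  Matrix.of fun l c =>
    if h : l.1 < d - 2 then r ⟨l.1, h⟩ c
    else if l.1 = d - 2 then M ⟨t.1, by have := t.2; omega⟩ c
    else M ⟨n + t.1, by have := t.2; omega⟩ c

lemma submatrix_rowsFn {n d : ℕ} (M : Matrix (Fin (2*n)) (Fin d) k)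
    (i : Fin (d-2) → Fin (2*n)) (t : Fin n) :
    M.submatrix (rowsFn d i t) id = matE d M (fun l => M (i l)) t := by
  ext l c
  simp only [Matrix.submatrix_apply, id, rowsFn, matE, Matrix.of_apply]
  split_ifs <;> rfl

lemma L2 {n d : ℕ} (hd : 2 ≤ d) (M : Matrix (Fin (2*n)) (Fin d) k)
    (r : Fin (d-2) → Fin d → k) (p q : Fin d) (hp : p.1 = d-2) (hq : q.1 = d-1) :
    ∑ t : Fin n, (matE d M r t).det
      = ∑ σ : Equiv.Perm (Fin d), ((Equiv.Perm.sign σ : ℤ) : k) *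
          (sb M (σ p) (σ q) *
            ∏ l ∈ (Finset.univ.erase p).erase q,
              (if h : l.1 < d-2 then r ⟨l.1, h⟩ (σ l) else 0)) := by
  have hpq : q ≠ p := by simp [Fin.ext_iff]; omega
  have step1 : ∀ t : Fin n, (matE d M r t).det
      = ∑ σ : Equiv.Perm (Fin d), ((Equiv.Perm.sign σ : ℤ) : k) *
          (M ⟨t.1, by have := t.2; omega⟩ (σ p) *
            (M ⟨n + t.1, by have := t.2; omega⟩ (σ q) *
              ∏ l ∈ (Finset.univ.erase p).erase q,
                (if h : l.1 < d-2 then r ⟨l.1, h⟩ (σ l) else 0))) := by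
    intro t
    rw [← Matrix.det_transpose, Matrix.det_apply']
    apply Finset.sum_congr rfl
    intro σ _
    congr 1
    have split2 : ∀ f : Fin d → k,
        ∏ i, f i = f p * (f q * ∏ l ∈ (Finset.univ.erase p).erase q, f l) := by
      intro f
      rw [Finset.mul_prod_erase _ f (Finset.mem_erase.mpr ⟨hpq, Finset.mem_univ q⟩),
        Finset.mul_prod_erase _ f (Finset.mem_univ p)]
    rw [split2 (fun i => (matE d M r t)ᵀ (σ i) i)]
    have hP : (matE d M r t)ᵀ (σ p) p = M ⟨t.1, by have := t.2; omega⟩ (σ p) := by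
      simp only [Matrix.transpose_apply, matE, Matrix.of_apply]
      rw [dif_neg (by omega : ¬ (p.1 < d - 2)), if_pos hp]
    have hQ : (matE d M r t)ᵀ (σ q) q = M ⟨n + t.1, by have := t.2; omega⟩ (σ q) := by
      simp only [Matrix.transpose_apply, matE, Matrix.of_apply]
      rw [dif_neg (by omega : ¬ (q.1 < d - 2)), if_neg (by omega : ¬ (q.1 = d - 2))]
    rw [hP, hQ]
    congr 2
    apply Finset.prod_congr rfl
    intro l hl
    obtain ⟨hlq, hlp, -⟩ : l ≠ q ∧ l ≠ p ∧ True := by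
      simp only [Finset.mem_erase] at hl
      exact ⟨hl.1, hl.2.1, trivial⟩
    have hld : l.1 < d - 2 := by
      have := l.2
      have h1 : l.1 ≠ d - 2 := fun h => hlp (Fin.ext (by rw [h, hp]))
      have h2 : l.1 ≠ d - 1 := fun h => hlq (Fin.ext (by rw [h, hq]))
      omega
    simp only [Matrix.transpose_apply, matE, Matrix.of_apply]
    rw [dif_pos hld, dif_pos hld]
  rw [Finset.sum_congr rfl (fun t _ => step1 t), Finset.sum_comm]
  apply Finset.sum_congr rfl
  intro σ _
  rw [sb, Finset.sum_mul, Finset.mul_sum]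
  apply Finset.sum_congr rfl
  intro t _
  ring

lemma vanish_of_sym {d : ℕ} (p q : Fin d) (hpq : p ≠ q) (S : Fin d → Fin d → k)
    (hsym : ∀ a b : Fin d, S a b = S b a) (P : Equiv.Perm (Fin d) → k)
    (hP : ∀ σ : Equiv.Perm (Fin d), P (σ * Equiv.swap p q) = P σ) :
    ∑ σ : Equiv.Perm (Fin d), ((Equiv.Perm.sign σ : ℤ) : k) * (S (σ p) (σ q) * P σ) = 0 := by
  apply Finset.sum_involution (fun σ _ => σ * Equiv.swap p q)
  · intro σ _
    have hsign : ((Equiv.Perm.sign (σ * Equiv.swap p q) : ℤ) : k)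
        = -((Equiv.Perm.sign σ : ℤ) : k) := by
      rw [Equiv.Perm.sign_mul, Equiv.Perm.sign_swap hpq]
      push_cast
      ring
    have h1 : (σ * Equiv.swap p q) p = σ q := by
      simp [Equiv.Perm.mul_apply]
    have h2 : (σ * Equiv.swap p q) q = σ p := by
      simp [Equiv.Perm.mul_apply]
    rw [hsign, h1, h2, hP σ, hsym (σ q) (σ p)]
    ring
  · intro σ _ _ h
    have := congrArg (fun τ : Equiv.Perm (Fin d) => τ p) h
    simp only [Equiv.Perm.mul_apply, Equiv.swap_apply_left] at this
    exact hpq (σ.injective this).symm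
  · intro σ _; exact Finset.mem_univ _
  · intro σ _
    rw [mul_assoc, Equiv.swap_mul_self, mul_one]

lemma fix_classify {d : ℕ} (p q : Fin d) (hpq : p ≠ q) (τ : Equiv.Perm (Fin d))
    (hfix : ∀ l : Fin d, l ≠ p → l ≠ q → τ l = l) :
    τ = 1 ∨ τ = Equiv.swap p q := by
  have key : ∀ z : Fin d, τ z = p ∨ τ z = q ∨ τ z = z := by
    intro z
    by_contra hcon
    push_neg at hcon
    have := hfix (τ z) hcon.1 hcon.2.1
    exact hcon.2.2 (τ.injective this)
  have hτp : τ p = p ∨ τ p = q := by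
    rcases key p with h | h | h <;> tauto
  have hτq : τ q = p ∨ τ q = q := by
    rcases key q with h | h | h <;> tauto
  rcases hτp with h | h
  · left
    refine Equiv.ext fun x => ?_
    by_cases hx1 : x = p
    · rw [hx1]; simpa using h
    by_cases hx2 : x = q
    · rw [hx2]
      rcases hτq with h2 | h2
      · exact absurd (τ.injective (h2.trans h.symm)) (Ne.symm hpq)
      · simpa using h2
    · simpa using hfix x hx1 hx2
  · right
    refine Equiv.ext fun x => ?_
    by_cases hx1 : x = p
    · rw [hx1, Equiv.swap_apply_left]; exact h
    by_cases hx2 : x = q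
    · rw [hx2, Equiv.swap_apply_right]
      rcases hτq with h2 | h2
      · exact h2
      · exact absurd (τ.injective (h2.trans h.symm)) (Ne.symm hpq)
    · rw [Equiv.swap_apply_of_ne_of_ne hx1 hx2]
      exact hfix x hx1 hx2

lemma forward_vanish {n d : ℕ} (hd : 2 ≤ d) (M : Matrix (Fin (2*n)) (Fin d) k)
    (hsym : ∀ a b : Fin d, sb M a b = sb M b a)
    (r : Fin (d-2) → Fin d → k) :
    ∑ t : Fin n, (matE d M r t).det = 0 := by
  have hp : ((⟨d-2, by omega⟩ : Fin d)).1 = d-2 := rfl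
  have hq : ((⟨d-1, by omega⟩ : Fin d)).1 = d-1 := rfl
  rw [L2 hd M r ⟨d-2, by omega⟩ ⟨d-1, by omega⟩ hp hq]
  have hpq : (⟨d-2, by omega⟩ : Fin d) ≠ ⟨d-1, by omega⟩ := by
    simp [Fin.ext_iff]; omega
  apply vanish_of_sym _ _ hpq (sb M) hsym
  intro σ
  apply Finset.prod_congr rfl
  intro l hl
  simp only [Finset.mem_erase] at hl
  have : (σ * Equiv.swap (⟨d-2, by omega⟩ : Fin d) ⟨d-1, by omega⟩) l = σ l := by
    rw [Equiv.Perm.mul_apply, Equiv.swap_apply_of_ne_of_ne hl.2.1 hl.1]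
  rw [this]

lemma exists_good_submatrix {n d : ℕ} (M : Matrix (Fin (2*n)) (Fin d) k)
    (hM : M.rank = d) :
    ∃ s : Fin d → Fin (2*n), StrictMono s ∧ IsUnit (M.submatrix s id).det := by
  classical
  have hspan : Submodule.span k (Set.range M) = ⊤ := by
    have h1 : Mᵀ.rank = d := by rw [Matrix.rank_transpose]; exact hM
    rw [Matrix.rank, Matrix.range_mulVecLin] at h1
    change Module.finrank k ↥(Submodule.span k (Set.range M)) = d at h1
    apply Submodule.eq_top_of_finrank_eq
    rw [h1]
    simp [Module.finrank_pi]
  obtain ⟨b, hbsub, hbspan, hbind⟩ := exists_linearIndependent k (Set.range M)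
  rw [hspan] at hbspan
  have hbfin : b.Finite := by
    have : FiniteDimensional k (Fin d → k) := by infer_instance
    exact hbind.setFinite
  have : Fintype b := hbfin.fintype
  let bas : Module.Basis b k (Fin d → k) := Module.Basis.mk hbind (by
    rw [Subtype.range_coe, hbspan])
  have hcard : Fintype.card b = d := by
    have := Module.finrank_eq_card_basis bas
    simp [Module.finrank_pi] at this
    rw [Fintype.card_eq_nat_card, Nat.card_coe_set_eq]
    omega
  have hex : ∀ v : b, ∃ w : Fin (2*n), M w = (v : Fin d → k) := by
    intro v
    obtain ⟨w, hw⟩ := hbsub v.2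
    exact ⟨w, hw⟩
  choose φ hφ using hex
  have hφinj : Function.Injective φ := by
    intro v v' h
    apply Subtype.ext
    rw [← hφ v, ← hφ v', h]
  let T : Finset (Fin (2*n)) := Finset.image φ Finset.univ
  have hT : T.card = d := by
    rw [Finset.card_image_of_injective _ hφinj, Finset.card_univ, hcard]
  let s : Fin d → Fin (2*n) := fun a => ((T.orderIsoOfFin hT) a : Fin (2*n))
  have hs : StrictMono s := fun a c hac =>
    Subtype.coe_lt_coe.mpr ((T.orderIsoOfFin hT).strictMono hac)
  refine ⟨s, hs, ?_⟩
  have hmem : ∀ a : Fin d, s a ∈ T := fun a => ((T.orderIsoOfFin hT) a).2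
  have hex2 : ∀ a : Fin d, ∃ v : b, φ v = s a := by
    intro a
    have := hmem a
    simp only [T, Finset.mem_image, Finset.mem_univ, true_and] at this
    obtain ⟨v, hv⟩ := this
    exact ⟨v, hv⟩
  choose ψ hψ using hex2
  have hψinj : Function.Injective ψ := by
    intro a c h
    apply hs.injective
    rw [← hψ a, ← hψ c, h]
  have hrows : (fun a => (M.submatrix s id) a) = (Subtype.val ∘ ψ) := by
    funext a
    have : (M.submatrix s id) a = M (s a) := rfl
    rw [this, ← hψ a, hφ (ψ a)]
    rfl
  have hind : LinearIndependent k (fun a => (M.submatrix s id) a) := by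
    rw [hrows]
    exact hbind.comp ψ hψinj
  rw [isUnit_iff_ne_zero]
  intro hdet
  have hdetT : (M.submatrix s id)ᵀ.det = 0 := by rw [Matrix.det_transpose]; exact hdet
  obtain ⟨v, hv0, hv⟩ := Matrix.exists_mulVec_eq_zero_iff.mpr hdetT
  have hsum : ∑ a : Fin d, v a • (M.submatrix s id) a = 0 := by
    funext j
    have h2 := congrFun hv j
    simp only [Matrix.mulVec, dotProduct, Matrix.transpose_apply, Pi.zero_apply] at h2
    simp only [Finset.sum_apply, Pi.smul_apply, smul_eq_mul, Pi.zero_apply]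
    rw [← h2]
    apply Finset.sum_congr rfl
    intro a _
    ring
  have hall := Fintype.linearIndependent_iff.mp hind v hsum
  exact hv0 (funext fun i => hall i)

lemma colSkip_val {d : ℕ} (j1 j2 : Fin d) (c : Fin (d-2)) :
    (colSkip d j1 j2 c).1
      = if c.1 < j1.1 then c.1 else if c.1 + 1 < j2.1 then c.1 + 1 else c.1 + 2 := by
  rw [colSkip]; split_ifs <;> rfl

lemma converse_core {n d : ℕ} (hd : 2 ≤ d) (M : Matrix (Fin (2*n)) (Fin d) k)
    (hM : M.rank = d)
    (h3 : ∀ i : Fin (d-2) → Fin (2*n), StrictMono i →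
      ∑ t : Fin n, (M.submatrix (rowsFn d i t) id).det = 0) :
    ∀ a b : Fin d, sb M a b = sb M b a := by
  classical
  obtain ⟨s, hsmono, hsdet⟩ := exists_good_submatrix M hM
  have hNB : (M * (M.submatrix s id)⁻¹) * (M.submatrix s id) = M := by
    rw [Matrix.mul_assoc, Matrix.nonsing_inv_mul _ hsdet, Matrix.mul_one]
  set B := M.submatrix s id with hB
  set N := M * B⁻¹ with hN
  have key : ∀ a b : Fin d, a.1 < b.1 → sb N a b = sb N b a := by
    intro a b hab
    set p : Fin d := ⟨d-2, by omega⟩ with hpdef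
    set q : Fin d := ⟨d-1, by omega⟩ with hqdef
    have hp1 : (p : ℕ) = d - 2 := rfl
    have hq1 : (q : ℕ) = d - 1 := rfl
    have hpq : p ≠ q := by simp [hpdef, hqdef, Fin.ext_iff]; omega
    -- the permutation σ1
    set g : Fin d → Fin d := fun l =>
      if h : l.1 < d-2 then colSkip d a b ⟨l.1, h⟩ else if l.1 = d-2 then a else b
      with hgdef
    have hgval : ∀ l : Fin d, (g l).1 =
        if l.1 < d-2 then
          (if l.1 < a.1 then l.1 else if l.1 + 1 < b.1 then l.1 + 1 else l.1 + 2)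
        else if l.1 = d-2 then a.1 else b.1 := by
      intro l
      simp only [hgdef]
      by_cases h : l.1 < d-2
      · rw [dif_pos h, if_pos h, colSkip_val]
      · rw [dif_neg h, if_neg h]
        by_cases h2 : l.1 = d-2
        · rw [if_pos h2, if_pos h2]
        · rw [if_neg h2, if_neg h2]
    have hginj : Function.Injective g := by
      intro l m hlm
      apply Fin.ext
      have h1 := congrArg Fin.val hlm
      rw [hgval l, hgval m] at h1
      have hl2 := l.2
      have hm2 := m.2
      have hb2 := b.2
      split_ifs at h1 <;> omega
    let σ1 : Equiv.Perm (Fin d) := Equiv.ofBijective g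
      (Finite.injective_iff_bijective.mp hginj)
    have hσ1 : ∀ l, σ1 l = g l := fun l => rfl
    have hσ1p : σ1 p = a := by
      rw [hσ1]
      simp only [hgdef]
      rw [dif_neg (by omega)]
      simp [hp1]
    have hσ1q : σ1 q = b := by
      rw [hσ1]
      simp only [hgdef]
      rw [dif_neg (by omega), if_neg (by omega)]
    have hσ1E : ∀ (l : Fin d) (h : l.1 < d-2), σ1 l = colSkip d a b ⟨l.1, h⟩ := by
      intro l h
      rw [hσ1]
      simp only [hgdef]
      rw [dif_pos h]
    set σ2 : Equiv.Perm (Fin d) := σ1 * Equiv.swap p q with hσ2def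
    have hσ2E : ∀ (l : Fin d), l ≠ p → l ≠ q → σ2 l = σ1 l := by
      intro l h1 h2
      rw [hσ2def, Equiv.Perm.mul_apply, Equiv.swap_apply_of_ne_of_ne h1 h2]
    have hσ2p : σ2 p = b := by
      rw [hσ2def, Equiv.Perm.mul_apply, Equiv.swap_apply_left, hσ1q]
    have hσ2q : σ2 q = a := by
      rw [hσ2def, Equiv.Perm.mul_apply, Equiv.swap_apply_right, hσ1p]
    have hσ12 : σ1 ≠ σ2 := by
      intro h
      have := congrArg (fun τ : Equiv.Perm (Fin d) => τ p) h
      rw [hσ1p, hσ2p] at this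
      omega
    -- the special rows
    set r : Fin (d-2) → Fin d → k := fun c => Pi.single (colSkip d a b c) 1 with hrdef
    set i : Fin (d-2) → Fin (2*n) := fun c => s (colSkip d a b c) with hidef
    have himono : StrictMono i := by
      intro c c' h
      apply hsmono
      rw [Fin.lt_def, colSkip_val, colSkip_val]
      rw [Fin.lt_def] at h
      split_ifs <;> omega
    have h0 : ∑ t : Fin n, (matE d M (fun l => M (i l)) t).det = 0 := by
      have := h3 i himono
      rw [Finset.sum_congr rfl
        (fun t _ => congrArg Matrix.det (submatrix_rowsFn M i t))] at this
      exact this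
    have hmatcong : ∀ t : Fin n,
        matE d M (fun l => M (i l)) t = (matE d N r t) * B := by
      intro t
      ext l c
      rw [Matrix.mul_apply]
      by_cases hl : l.1 < d-2
      · simp only [matE, Matrix.of_apply, dif_pos hl]
        rw [hrdef]
        simp only [Pi.single_apply, ite_mul, one_mul, zero_mul]
        rw [Finset.sum_ite_eq' Finset.univ (colSkip d a b ⟨l.1, hl⟩) (fun m => B m c)]
        simp [hidef, hB]
      · by_cases hl2 : l.1 = d-2
        · simp only [matE, Matrix.of_apply, dif_neg hl, if_pos hl2]
          rw [← Matrix.mul_apply, hNB]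
        · simp only [matE, Matrix.of_apply, dif_neg hl, if_neg hl2]
          rw [← Matrix.mul_apply, hNB]
    have h1 : (∑ t : Fin n, (matE d N r t).det) * B.det = 0 := by
      rw [Finset.sum_mul]
      rw [← h0]
      apply Finset.sum_congr rfl
      intro t _
      rw [hmatcong t, Matrix.det_mul]
    have h2 : ∑ t : Fin n, (matE d N r t).det = 0 := by
      rcases mul_eq_zero.mp h1 with h | h
      · exact h
      · exact absurd h (isUnit_iff_ne_zero.mp hsdet)
    rw [L2 hd N r p q rfl rfl] at h2
    -- evaluate the sum: only σ1 and σ2 contribute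
    have hprod1 : (∏ l ∈ (Finset.univ.erase p).erase q,
        (if h : l.1 < d-2 then r ⟨l.1, h⟩ (σ1 l) else 0)) = 1 := by
      apply Finset.prod_eq_one
      intro l hl
      simp only [Finset.mem_erase] at hl
      have hld : l.1 < d-2 := by
        have := l.2
        have e1 : l.1 ≠ d-2 := fun h => hl.2.1 (Fin.ext h)
        have e2 : l.1 ≠ d-1 := fun h => hl.1 (Fin.ext h)
        omega
      rw [dif_pos hld, hσ1E l hld, hrdef]
      simp
    have hprod2 : (∏ l ∈ (Finset.univ.erase p).erase q,
        (if h : l.1 < d-2 then r ⟨l.1, h⟩ (σ2 l) else 0)) = 1 := by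
      apply Finset.prod_eq_one
      intro l hl
      simp only [Finset.mem_erase] at hl
      have hld : l.1 < d-2 := by
        have := l.2
        have e1 : l.1 ≠ d-2 := fun h => hl.2.1 (Fin.ext h)
        have e2 : l.1 ≠ d-1 := fun h => hl.1 (Fin.ext h)
        omega
      rw [dif_pos hld, hσ2E l hl.2.1 hl.1, hσ1E l hld, hrdef]
      simp
    have hzero : ∀ σ ∈ (Finset.univ : Finset (Equiv.Perm (Fin d))),
        σ ≠ σ1 ∧ σ ≠ σ2 →
        ((Equiv.Perm.sign σ : ℤ) : k) *
          (sb N (σ p) (σ q) * ∏ l ∈ (Finset.univ.erase p).erase q,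
            (if h : l.1 < d-2 then r ⟨l.1, h⟩ (σ l) else 0)) = 0 := by
      intro σ _ hσ
      have hexl : ∃ l : Fin d, l ≠ p ∧ l ≠ q ∧ σ l ≠ σ1 l := by
        by_contra hcon
        push_neg at hcon
        have hfix : ∀ l : Fin d, l ≠ p → l ≠ q → (σ1⁻¹ * σ) l = l := by
          intro l h1 h2
          rw [Equiv.Perm.mul_apply, hcon l h1 h2]
          exact σ1.symm_apply_apply l
        rcases fix_classify p q hpq (σ1⁻¹ * σ) hfix with h | h
        · apply hσ.1
          have := congrArg (fun τ => σ1 * τ) h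
          simpa [mul_inv_cancel_left] using this
        · apply hσ.2
          have := congrArg (fun τ => σ1 * τ) h
          simpa [mul_inv_cancel_left, hσ2def] using this
      obtain ⟨l, hlp, hlq, hlne⟩ := hexl
      have hld : l.1 < d-2 := by
        have := l.2
        have e1 : l.1 ≠ d-2 := fun h => hlp (Fin.ext h)
        have e2 : l.1 ≠ d-1 := fun h => hlq (Fin.ext h)
        omega
      have hlmem : l ∈ (Finset.univ.erase p).erase q := by
        simp [Finset.mem_erase, hlq, hlp]
      have : (if h : l.1 < d-2 then r ⟨l.1, h⟩ (σ l) else 0) = 0 := by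
        rw [dif_pos hld, hrdef]
        rw [hσ1E l hld] at hlne
        exact Pi.single_eq_of_ne hlne 1
      rw [Finset.prod_eq_zero hlmem this]
      ring
    rw [Finset.sum_eq_add_of_mem σ1 σ2 (Finset.mem_univ _) (Finset.mem_univ _)
      hσ12 hzero] at h2
    rw [hprod1, hprod2, hσ1p, hσ1q, hσ2p, hσ2q] at h2
    have hsign2 : ((Equiv.Perm.sign σ2 : ℤ) : k) = -((Equiv.Perm.sign σ1 : ℤ) : k) := by
      rw [hσ2def, Equiv.Perm.sign_mul, Equiv.Perm.sign_swap hpq]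
      push_cast
      ring
    rw [hsign2] at h2
    have hfactor : ((Equiv.Perm.sign σ1 : ℤ) : k) * (sb N a b - sb N b a) = 0 := by
      linear_combination h2
    have hsne : ((Equiv.Perm.sign σ1 : ℤ) : k) ≠ 0 := by
      rcases Int.units_eq_one_or (Equiv.Perm.sign σ1) with h | h <;> rw [h] <;> simp
    have := mul_eq_zero.mp hfactor
    rcases this with h | h
    · exact absurd h hsne
    · linear_combination h
  -- from N symmetric to M symmetric
  have hQN : Nᵀ * Jmat k n * N = 0 := by
    ext a b
    simp only [Matrix.zero_apply]
    rw [qm_apply]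
    rcases lt_trichotomy a.1 b.1 with h | h | h
    · rw [key a b h]; ring
    · rw [show a = b from Fin.ext h]; ring
    · rw [key b a h]; ring
  have hQM : Mᵀ * Jmat k n * M = 0 := by
    have : Mᵀ * Jmat k n * M = Bᵀ * (Nᵀ * Jmat k n * N) * B := by
      conv_lhs => rw [← hNB]
      simp only [Matrix.transpose_mul, Matrix.mul_assoc]
    rw [this, hQN, Matrix.mul_zero, Matrix.zero_mul]
  intro a b
  have := congrFun (congrFun hQM a) b
  rw [show (Mᵀ * Jmat k n * M) a b = sb M b a - sb M a b from qm_apply M a b] at this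
  have hz : (0 : Matrix (Fin d) (Fin d) k) a b = 0 := rfl
  rw [hz] at this
  linear_combination -this

lemma d2_sum {n d : ℕ} (M : Matrix (Fin (2*n)) (Fin d) k) (a0 a1 : Fin d) :
    ∑ t : Fin n,
      (M ⟨t.1, by have := t.2; omega⟩ a0 * M ⟨n + t.1, by have := t.2; omega⟩ a1
        - M ⟨n + t.1, by have := t.2; omega⟩ a0 * M ⟨t.1, by have := t.2; omega⟩ a1)
      = sb M a0 a1 - sb M a1 a0 := by
  rw [Finset.sum_sub_distrib]
  congr 1
  rw [sb]
  apply Finset.sum_congr rfl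
  intro t _
  ring

end Stmt7

/-- let `2 ≤ d ≤ n`, `u, v ∈ I^{Sp}_{d,2n}` with `u ≥^{Sp} v`, and let `M`
be a `2n×d` matrix of rank `d` whose column span `U` satisfies `dim(U ∩ K_{u_t}) ≥ t`
and `dim(U ∩ K_{σ(v_t)}) ≤ t−1` for all `t` (so `U` lies in the Richardson variety of
the Grassmannian).  Then `U` is isotropic — equivalently `U ∈ R(u,v) ⊆ Sp_{2n}(k)/P_d` —
iff: when `d = 2`, `Σ_{t=1}^n (x_{t,1} x_{n+t,2} − x_{n+t,1} x_{t,2}) = 0`; and when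
`d ≥ 3`, `Σ_{t=1}^n det R(i,t) = 0` for every strictly increasing
`i ∈ I_{d−2,2n}`, where `R(i,t)` has rows `i_1,…,i_{d−2}, t, n+t` of `M` in order. -/

theorem stmt7 {k : Type*} [Field k] [IsAlgClosed k] (n d : ℕ) (hd : 2 ≤ d) (hdn : d ≤ n)
    (u v : Fin d → Fin (2*n)) (hu : IsSpTuple n u) (hv : IsSpTuple n v) (huv : spGE n u v)
    (M : Matrix (Fin (2*n)) (Fin d) k) (hM : M.rank = d)
    (hSch : ∀ t : Fin d, t.1 + 1 ≤
      Module.finrank k ↥(LinearMap.range M.mulVecLin ⊓ Kspace k n ((u t).1 + 1)))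
    (hOpp : ∀ t : Fin d,
      Module.finrank k ↥(LinearMap.range M.mulVecLin ⊓ Kspace k n (sigmaFn n ((v t).1 + 1)))
        ≤ t.1) :
    IsIsotropic k n (LinearMap.range M.mulVecLin) ↔
      ((d = 2 →
        ∑ t : Fin n,
          (M ⟨t.1, by have := t.2; omega⟩ ⟨0, by omega⟩
              * M ⟨n + t.1, by have := t.2; omega⟩ ⟨1, by omega⟩
            - M ⟨n + t.1, by have := t.2; omega⟩ ⟨0, by omega⟩
              * M ⟨t.1, by have := t.2; omega⟩ ⟨1, by omega⟩) = 0) ∧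
       (3 ≤ d →
        ∀ i : Fin (d-2) → Fin (2*n), StrictMono i →
          ∑ t : Fin n, (M.submatrix (rowsFn d i t) id).det = 0)) := by
  rw [Stmt7.iso_iff' M]
  constructor
  · intro hsym
    constructor
    · intro hd2
      rw [Stmt7.d2_sum M, hsym ⟨0, by omega⟩ ⟨1, by omega⟩]
      ring
    · intro _ i hi
      rw [Finset.sum_congr rfl
        (fun t _ => congrArg Matrix.det (Stmt7.submatrix_rowsFn M i t))]
      exact Stmt7.forward_vanish hd M hsym _
  · rintro ⟨h2c, h3c⟩
    rcases eq_or_lt_of_le hd with hd2 | hd3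
    · have h0 := h2c hd2.symm
      rw [Stmt7.d2_sum M] at h0
      have hA : Stmt7.sb M (⟨0, by omega⟩ : Fin d) ⟨1, by omega⟩
          = Stmt7.sb M ⟨1, by omega⟩ ⟨0, by omega⟩ := by
        linear_combination h0
      have hcases : ∀ z : Fin d, z = (⟨0, by omega⟩ : Fin d) ∨ z = ⟨1, by omega⟩ := by
        intro z
        have hz := z.2
        rcases (by omega : z.1 = 0 ∨ z.1 = 1) with h | h
        · exact Or.inl (Fin.ext h)
        · exact Or.inr (Fin.ext h)
      intro x y
      rcases hcases x with rfl | rfl <;> rcases hcases y with rfl | rfl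
      · rfl
      · exact hA
      · exact hA.symm
      · rfl
    · exact Stmt7.converse_core hd M hM (h3c (by omega))
end

section
/- Let k be an algebraically closed field, 1 ≤ d ≤ n, and i ∈ I^{Sp}_{d,2n}. Then the union over all j ∈ I^{Sp}_{d,2n} with j ≤^{Sp} i of the B-orbits {b·e_j : b ∈ B} (where e_j = span(e_{j_1},…,e_{j_d})) equals the set of d-dimensional isotropic subspaces U of k^{2n} with dim(U ∩ K_{i_t}) ≥ t for all 1 ≤ t ≤ d. (Set-theoretic description of the Schubert variety X_i in Sp_{2n}(k)/P_d.) -/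
open Matrix BigOperators

namespace SpAux

variable {k : Type*} [Field k] {n : ℕ}

/-- flag position of a (0-indexed) coordinate `p < 2n`. -/
def fp (n p : ℕ) : ℕ := if p < n then p else 3*n - 1 - p

lemma fp_lt {p : ℕ} (hp : p < 2*n) : fp n p < 2*n := by unfold fp; split <;> omega

lemma fp_inj {p q : ℕ} (hp : p < 2*n) (hq : q < 2*n) (h : fp n p = fp n q) : p = q := by
  unfold fp at h; split at h <;> split at h <;> omega

/-- the symplectic partner of a coordinate. -/
def pt (a : Fin (2*n)) : Fin (2*n) :=
  if h : a.1 < n then ⟨a.1 + n, by omega⟩ else ⟨a.1 - n, by have := a.2; omega⟩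

@[simp] lemma pt_pt (a : Fin (2*n)) : pt (pt a) = a := by
  have := a.2; unfold pt; split <;> (simp only []; split <;> (apply Fin.ext; simp <;> omega))

lemma pt_val (a : Fin (2*n)) : (pt a).1 = if a.1 < n then a.1 + n else a.1 - n := by
  unfold pt; split <;> simp

lemma fp_pt (a : Fin (2*n)) : fp n (pt a).1 = 2*n - 1 - fp n a.1 := by
  have := a.2; rw [pt_val]; unfold fp; split <;> split <;> omega

/-- sign attached to a coordinate. -/
def sg (a : Fin (2*n)) : k := if a.1 < n then 1 else -1

lemma pt_val_lt {a : Fin (2*n)} (h : a.1 < n) : (pt a).1 = a.1 + n := by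
  rw [pt_val, if_pos h]

lemma pt_val_ge {a : Fin (2*n)} (h : n ≤ a.1) : (pt a).1 = a.1 - n := by
  rw [pt_val, if_neg (by omega)]

lemma sg_pt (a : Fin (2*n)) : (sg (pt a) : k) = -sg a := by
  have h2 := a.2; unfold sg
  rcases Nat.lt_or_ge a.1 n with h | h
  · have hv := pt_val_lt h
    rw [if_neg (show ¬ (pt a).1 < n by omega), if_pos h]
  · have hv := pt_val_ge h
    rw [if_pos (show (pt a).1 < n by omega), if_neg (by omega)]; ring

lemma sg_mul_sg (a : Fin (2*n)) : (sg a : k) * sg a = 1 := by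
  unfold sg; split <;> ring

lemma sg_ne_zero (a : Fin (2*n)) : (sg a : k) ≠ 0 := by
  unfold sg; split <;> simp

lemma Jmat_eq (p q : Fin (2*n)) :
    Jmat k n p q = if q = pt p then -sg p else 0 := by
  have hp := p.2; have hq := q.2
  unfold Jmat sg
  rw [Matrix.of_apply]
  rcases Nat.lt_or_ge p.1 n with h | h
  · have hv := pt_val_lt h
    by_cases hq1 : q = pt p
    · subst hq1
      rw [if_pos rfl, if_pos (show p.1 + n = (pt p).1 by omega), if_pos h]
    · have h1 : p.1 + n ≠ q.1 := fun hc => hq1 (Fin.ext (by omega))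
      rw [if_neg h1, if_neg (by omega), if_neg hq1]
  · have hv := pt_val_ge h
    by_cases hq1 : q = pt p
    · subst hq1
      rw [if_pos rfl, if_neg (show ¬ p.1 + n = (pt p).1 by omega),
        if_pos (show (pt p).1 + n = p.1 by omega), if_neg (by omega)]
      ring
    · have h2 : q.1 + n ≠ p.1 := fun hc => hq1 (Fin.ext (by omega))
      rw [if_neg (by omega), if_neg h2, if_neg hq1]

lemma Jmat_pt (p : Fin (2*n)) : Jmat k n p (pt p) = -sg p := by
  rw [Jmat_eq, if_pos rfl]

lemma Jmat_ne {p q : Fin (2*n)} (h : q ≠ pt p) : Jmat k n p q = 0 := by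
  rw [Jmat_eq, if_neg h]

end SpAux

namespace SpAux

variable {k : Type*} [Field k] {n : ℕ}

/-- The flag subspace of functions supported on coordinates of flag position `< m`. -/
def Fm (k : Type*) [Field k] (n m : ℕ) : Submodule k (Fin (2*n) → k) where
  carrier := {v | ∀ q : Fin (2*n), m ≤ fp n q.1 → v q = 0}
  add_mem' := by intro a b ha hb q hq; simp [ha q hq, hb q hq]
  zero_mem' := by intro q hq; rfl
  smul_mem' := by intro c a ha q hq; simp [ha q hq]

lemma mem_Fm {v : Fin (2*n) → k} {m : ℕ} :
    v ∈ Fm k n m ↔ ∀ q : Fin (2*n), m ≤ fp n q.1 → v q = 0 := Iff.rfl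

lemma Fm_mono {m m' : ℕ} (h : m ≤ m') : Fm k n m ≤ Fm k n m' := by
  intro v hv q hq; exact hv q (le_trans h hq)

lemma Fm_zero : Fm k n 0 = ⊥ := by
  ext v; simp only [mem_Fm, Submodule.mem_bot]
  constructor
  · intro h; funext q; exact h q (Nat.zero_le _)
  · rintro rfl; intro q _; rfl

lemma Fm_top : Fm k n (2*n) = ⊤ := by
  ext v; simp only [mem_Fm, Submodule.mem_top, iff_true]
  intro q hq; exact absurd (fp_lt q.2) (by omega)

lemma single_mem_Fm {p : Fin (2*n)} {m : ℕ} (h : fp n p.1 < m) (x : k) :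
    (Pi.single p x : Fin (2*n) → k) ∈ Fm k n m := by
  rw [mem_Fm]
  intro q hq
  have hqp : q ≠ p := by rintro rfl; omega
  exact @Pi.single_eq_of_ne (Fin (2*n)) (fun _ => k) _ _ p q hqp x

lemma single_apply_ne {p q : Fin (2*n)} (h : q ≠ p) (x : k) :
    (Pi.single p x : Fin (2*n) → k) q = 0 :=
  @Pi.single_eq_of_ne (Fin (2*n)) (fun _ => k) _ _ p q h x

lemma pt_eq_iff {a b : Fin (2*n)} : pt a = b ↔ a = pt b := by
  constructor
  · rintro rfl; rw [pt_pt]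
  · rintro rfl; rw [pt_pt]

/-- `Kspace` at index `q+1` (1-indexed) is the flag space at `fp q + 1`. -/
lemma Kspace_eq_Fm (q : Fin (2*n)) :
    Kspace k n (q.1 + 1) = Fm k n (fp n q.1 + 1) := by
  have hq2 := q.2
  apply le_antisymm
  · rw [Kspace, Submodule.span_le]
    rintro v ⟨p, hp, rfl⟩
    have hp2 := p.2
    apply single_mem_Fm
    unfold fp; split <;> split <;> omega
  · intro v hv
    have hv' : v = ∑ p : Fin (2*n), (Pi.single p (v p) : Fin (2*n) → k) := by
      ext a; rw [Finset.sum_apply]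
      rw [Finset.sum_eq_single a (fun b _ hb => single_apply_ne (Ne.symm hb) _)
        (fun h => absurd (Finset.mem_univ a) h)]
      simp
    rw [hv']
    apply Submodule.sum_mem
    intro p _
    by_cases hp : fp n p.1 ≤ fp n q.1
    · have : (Pi.single p (v p) : Fin (2*n) → k) = (v p) • (Pi.single p (1:k) : Fin (2*n) → k) := by
        ext a
        by_cases hap : a = p
        · subst hap; simp
        · rw [single_apply_ne hap, Pi.smul_apply, single_apply_ne hap, smul_zero]
      rw [this]
      apply Submodule.smul_mem
      apply Submodule.subset_span
      refine ⟨p, ?_, rfl⟩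
      have hp2 := p.2
      unfold fp at hp; split at hp <;> split at hp <;> omega
    · rw [hv p (by omega)]
      simp

/-- The symplectic pairing. -/
def omg (u w : Fin (2*n) → k) : k := u ⬝ᵥ (Jmat k n).mulVec w

lemma Jmat_mulVec (w : Fin (2*n) → k) (a : Fin (2*n)) :
    (Jmat k n).mulVec w a = sg (pt a) * w (pt a) := by
  have h : (Jmat k n).mulVec w a = ∑ b : Fin (2*n), Jmat k n a b * w b := rfl
  rw [h, Finset.sum_eq_single (pt a)]
  · rw [Jmat_pt, sg_pt]
  · intro b _ hb
    rw [Jmat_ne hb, zero_mul]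
  · intro h; exact absurd (Finset.mem_univ _) h

lemma omg_eq_sum (u w : Fin (2*n) → k) :
    omg u w = ∑ a : Fin (2*n), u a * (sg (pt a) * w (pt a)) := by
  unfold omg dotProduct
  exact Finset.sum_congr rfl fun a _ => by rw [Jmat_mulVec]

lemma omg_single_left (p : Fin (2*n)) (w : Fin (2*n) → k) :
    omg (Pi.single p 1) w = sg (pt p) * w (pt p) := by
  rw [omg_eq_sum, Finset.sum_eq_single p]
  · simp
  · intro b _ hb; rw [single_apply_ne hb, zero_mul]
  · intro h; exact absurd (Finset.mem_univ _) h

lemma omg_single_right (x : Fin (2*n) → k) (q : Fin (2*n)) :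
    omg x (Pi.single q 1) = x (pt q) * sg q := by
  rw [omg_eq_sum, Finset.sum_eq_single (pt q)]
  · rw [pt_pt, Pi.single_eq_same, mul_one]
  · intro b _ hb
    have hbq : pt b ≠ q := fun h => hb (pt_eq_iff.mp h)
    rw [single_apply_ne hbq 1, mul_zero, mul_zero]
  · intro h; exact absurd (Finset.mem_univ _) h

lemma omg_single_single (p q : Fin (2*n)) :
    omg (Pi.single p (1:k)) (Pi.single q (1:k)) = Jmat k n p q := by
  rw [omg_single_left, Jmat_eq]
  by_cases h : q = pt p
  · subst h; rw [if_pos rfl, Pi.single_eq_same, mul_one, sg_pt]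
  · rw [if_neg h, single_apply_ne (Ne.symm h) 1, mul_zero]

lemma omg_add_left (u v w : Fin (2*n) → k) : omg (u + v) w = omg u w + omg v w := by
  unfold omg; rw [add_dotProduct]

lemma omg_add_right (u v w : Fin (2*n) → k) : omg u (v + w) = omg u v + omg u w := by
  unfold omg; rw [Matrix.mulVec_add, dotProduct_add]

lemma omg_smul_left (c : k) (u w : Fin (2*n) → k) : omg (c • u) w = c * omg u w := by
  unfold omg; rw [smul_dotProduct]; rfl

lemma omg_smul_right (c : k) (u w : Fin (2*n) → k) : omg u (c • w) = c * omg u w := by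
  unfold omg; rw [Matrix.mulVec_smul, dotProduct_smul]; rfl

lemma omg_sub_right (u v w : Fin (2*n) → k) : omg u (v - w) = omg u v - omg u w := by
  have := omg_add_right u w (v - w); rw [add_sub_cancel] at this; rw [this]; ring

lemma omg_zero_left (w : Fin (2*n) → k) : omg 0 w = 0 := zero_dotProduct _

lemma omg_zero_right (u : Fin (2*n) → k) : omg u 0 = 0 := by
  unfold omg; rw [Matrix.mulVec_zero, dotProduct_zero]

lemma omg_sum_left {ι : Type*} (s : Finset ι) (f : ι → Fin (2*n) → k) (w : Fin (2*n) → k) :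
    omg (∑ t ∈ s, f t) w = ∑ t ∈ s, omg (f t) w := by
  classical
  induction s using Finset.induction_on with
  | empty => simp [omg_zero_left]
  | insert _ _ h ih => rw [Finset.sum_insert h, Finset.sum_insert h, omg_add_left, ih]

lemma omg_sum_right {ι : Type*} (s : Finset ι) (u : Fin (2*n) → k) (f : ι → Fin (2*n) → k) :
    omg u (∑ t ∈ s, f t) = ∑ t ∈ s, omg u (f t) := by
  classical
  induction s using Finset.induction_on with
  | empty => simp [omg_zero_right]
  | insert _ _ h ih => rw [Finset.sum_insert h, Finset.sum_insert h, omg_add_right, ih]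

lemma ptEquiv : Function.Involutive (pt : Fin (2*n) → Fin (2*n)) := pt_pt

lemma omg_antisymm (u w : Fin (2*n) → k) : omg u w = -omg w u := by
  rw [omg_eq_sum, omg_eq_sum, ← Finset.sum_neg_distrib]
  refine Fintype.sum_equiv (ptEquiv.toPerm) _ _ fun a => ?_
  simp only [Function.Involutive.coe_toPerm, pt_pt]
  rw [sg_pt]; ring

end SpAux

namespace SpAux

variable {k : Type*} [Field k] {n : ℕ}

lemma sympl_entry (M : Matrix (Fin (2*n)) (Fin (2*n)) k) (a b : Fin (2*n)) :
    (Mᵀ * Jmat k n * M) a b = omg (fun q => M q a) (fun q => M q b) := by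
  have h1 : ∀ q, (Mᵀ * Jmat k n) a q = ∑ p, M p a * Jmat k n p q := by
    intro q; rw [Matrix.mul_apply]
    exact Finset.sum_congr rfl fun p _ => by rw [Matrix.transpose_apply]
  have h2 : omg (fun q => M q a) (fun q => M q b)
      = ∑ p, M p a * ((Jmat k n).mulVec (fun q => M q b) p) := rfl
  rw [h2, Matrix.mul_apply]
  calc ∑ q, (Mᵀ * Jmat k n) a q * M q b
      = ∑ q, ∑ p, M p a * Jmat k n p q * M q b := by
        refine Finset.sum_congr rfl fun q _ => ?_; rw [h1 q, Finset.sum_mul]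
    _ = ∑ p, ∑ q, M p a * Jmat k n p q * M q b := Finset.sum_comm
    _ = ∑ p, M p a * ((Jmat k n).mulVec (fun q => M q b) p) := by
        refine Finset.sum_congr rfl fun p _ => ?_
        have h3 : (Jmat k n).mulVec (fun q => M q b) p = ∑ q, Jmat k n p q * M q b := rfl
        rw [h3, Finset.mul_sum]
        exact Finset.sum_congr rfl fun q _ => by ring

lemma sympl_iff (M : Matrix (Fin (2*n)) (Fin (2*n)) k) :
    Mᵀ * Jmat k n * M = Jmat k n ↔
      ∀ a b : Fin (2*n), omg (fun q => M q a) (fun q => M q b) = Jmat k n a b := by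
  rw [← Matrix.ext_iff]
  exact forall_congr' fun a => forall_congr' fun b => by rw [sympl_entry]

lemma omg_mulVec (M : Matrix (Fin (2*n)) (Fin (2*n)) k)
    (h : Mᵀ * Jmat k n * M = Jmat k n) (x y : Fin (2*n) → k) :
    omg (M.mulVec x) (M.mulVec y) = omg x y := by
  unfold omg
  rw [Matrix.dotProduct_mulVec, ← Matrix.vecMul_transpose, Matrix.vecMul_vecMul,
    ← Matrix.dotProduct_mulVec, Matrix.mulVec_mulVec, h]

lemma sympl_injective (M : Matrix (Fin (2*n)) (Fin (2*n)) k)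
    (h : Mᵀ * Jmat k n * M = Jmat k n) : Function.Injective M.mulVec := by
  intro x y hxy
  have hz : M.mulVec (x - y) = 0 := by
    have := map_sub M.mulVecLin x y
    simp only [Matrix.mulVecLin_apply] at this
    rw [this, hxy, sub_self]
  have hzero : ∀ p : Fin (2*n), (x - y) (pt p) = 0 := by
    intro p
    have h1 : omg (Pi.single p (1:k)) (x - y) = 0 := by
      rw [← omg_mulVec M h, hz, omg_zero_right]
    rw [omg_single_left] at h1
    exact (mul_eq_zero.mp h1).resolve_left (sg_ne_zero _)
  have : x - y = 0 := funext fun q => by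
    have := hzero (pt q); rwa [pt_pt] at this
  exact sub_eq_zero.mp this

end SpAux

namespace SpAux

variable {k : Type*} [Field k] {n : ℕ} {M : Matrix (Fin (2*n)) (Fin (2*n)) k}

lemma inB_col_low (hM : inB k n M) {c q : Fin (2*n)} (hc : c.1 < n) (hq : c.1 < q.1) :
    M q c = 0 := by
  rcases Nat.lt_or_ge q.1 n with h | h
  · exact hM.2 q c (Or.inr ⟨h, hc, hq⟩)
  · exact hM.2 q c (Or.inl ⟨h, hc⟩)

lemma inB_D (hM : inB k n M) : ∀ x : ℕ,
    (∀ a b : Fin (2*n), a.1 = n + x → n ≤ b.1 → a.1 < b.1 → M a b = 0) ∧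
    (∀ a : Fin (2*n), a.1 = x → x < n → M a a * M (pt a) (pt a) = 1) := by
  have hs := (sympl_iff M).mp hM.1
  intro x
  induction x using Nat.strong_induction_on with
  | _ x IH =>
    have key : ∀ a b : Fin (2*n), a.1 = x → a.1 < n → n ≤ b.1 → a.1 ≤ b.1 - n →
        -(M a a * M (pt a) b) = Jmat k n a b := by
      intro a b hax hx hb hxb
      have hrel := hs a b
      rw [omg_eq_sum] at hrel
      rw [Finset.sum_eq_single a] at hrel
      · rw [← hrel, sg_pt]
        have hsa : (sg a : k) = 1 := if_pos hx
        rw [hsa]; ring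
      · intro p _ hpa
        by_cases hp : p.1 < a.1
        · have hptp : (pt p).1 = n + p.1 := by rw [pt_val_lt (by omega)]; omega
          have h0 : M (pt p) b = 0 := (IH p.1 (by omega)).1 (pt p) b hptp hb (by omega)
          rw [h0, mul_zero, mul_zero]
        · have hpx : a.1 < p.1 := by
            rcases Nat.lt_or_ge a.1 p.1 with h | h
            · exact h
            · exact absurd (Fin.ext (by omega : p.1 = a.1)) hpa
          rw [inB_col_low hM hx hpx, zero_mul]
      · intro h; exact absurd (Finset.mem_univ _) h
    have QQ : ∀ a : Fin (2*n), a.1 = x → x < n → M a a * M (pt a) (pt a) = 1 := by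
      intro a hax hx
      have hpt := pt_val_lt (show a.1 < n by omega)
      have hk := key a (pt a) hax (by omega) (by omega) (by omega)
      rw [Jmat_pt] at hk
      have hsa : (sg a : k) = 1 := if_pos (by omega)
      rw [hsa] at hk
      exact neg_injective hk
    refine ⟨?_, QQ⟩
    intro a b hax hb hab
    have ha2 := a.2
    have hx : x < n := by omega
    set a0 := pt a with ha0
    have hva : a0.1 = x := by rw [ha0, pt_val_ge (by omega)]; omega
    have hpta : pt a0 = a := pt_pt a
    have hQ := QQ a0 hva hx
    have hptv := pt_val_lt (show a0.1 < n by omega)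
    have hk := key a0 b hva (by omega) hb (by omega)
    have hbne : b ≠ pt a0 := by
      intro hc
      rw [hc, hpta] at hab
      exact lt_irrefl _ hab
    rw [Jmat_ne hbne] at hk
    have hprod : M a0 a0 * M (pt a0) b = 0 := neg_eq_zero.mp hk
    have hMa0 : M a0 a0 ≠ 0 := fun hc => by rw [hc, zero_mul] at hQ; exact zero_ne_one hQ
    have hfin := (mul_eq_zero.mp hprod).resolve_left hMa0
    rwa [hpta] at hfin

/-- columns of a matrix in `B` are supported on coordinates of flag position
at most that of the column index. -/
lemma inB_colsupp (hM : inB k n M) {c q : Fin (2*n)} (h : fp n c.1 < fp n q.1) :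
    M q c = 0 := by
  have hc2 := c.2; have hq2 := q.2
  rcases Nat.lt_or_ge c.1 n with hc | hc
  · have hfc : fp n c.1 = c.1 := if_pos hc
    apply inB_col_low hM hc
    rw [hfc] at h
    unfold fp at h; split at h <;> omega
  · have hfc : fp n c.1 = 3*n - 1 - c.1 := if_neg (by omega)
    rcases Nat.lt_or_ge q.1 n with hq | hq
    · have hfq : fp n q.1 = q.1 := if_pos hq
      omega
    · have hfq : fp n q.1 = 3*n - 1 - q.1 := if_neg (by omega)
      exact (inB_D hM (q.1 - n)).1 q c (by omega) hc (by omega)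

lemma inB_mulVec_Fm (hM : inB k n M) {v : Fin (2*n) → k} {m : ℕ} (hv : v ∈ Fm k n m) :
    M.mulVec v ∈ Fm k n m := by
  rw [mem_Fm] at hv ⊢
  intro q hq
  have : M.mulVec v q = ∑ c : Fin (2*n), M q c * v c := rfl
  rw [this]
  apply Finset.sum_eq_zero
  intro c _
  by_cases hc : fp n c.1 < m
  · rw [inB_colsupp hM (by omega), zero_mul]
  · rw [hv c (by omega), mul_zero]

end SpAux

namespace SpAux

variable {k : Type*} [Field k] {n d : ℕ}

lemma tuple_fp_mono {j : Fin d → Fin (2*n)} (hj : IsSpBarTuple n j)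
    {s t : Fin d} (hst : s ≤ t) : fp n (j s).1 ≤ fp n (j t).1 := by
  rcases eq_or_lt_of_le hst with h | h
  · rw [h]
  · obtain ⟨-, r, hrd, hinc, hlt, hdec, hge⟩ := hj
    have hs2 := (j s).2; have ht2 := (j t).2
    by_cases htr : t.1 < r
    · have h1 : j s < j t := hinc s t h htr
      have h2 : (j s).1 < n := hlt s (by omega)
      have h3 : (j t).1 < n := hlt t htr
      rw [Fin.lt_def] at h1
      unfold fp; rw [if_pos h2, if_pos h3]; omega
    · by_cases hsr : s.1 < r
      · have h2 : (j s).1 < n := hlt s hsr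
        have h3 : n ≤ (j t).1 := hge t (by omega)
        unfold fp; rw [if_pos h2, if_neg (by omega)]; omega
      · have h1 : j t < j s := hdec s t h (by omega)
        have h2 : n ≤ (j s).1 := hge s (by omega)
        have h3 : n ≤ (j t).1 := hge t (by omega)
        rw [Fin.lt_def] at h1
        unfold fp; rw [if_neg (by omega), if_neg (by omega)]; omega

lemma spGE_fp {i j : Fin d → Fin (2*n)} (hji : spGE n i j) (t : Fin d) :
    fp n (j t).1 ≤ fp n (i t).1 := by
  have h := hji t
  have hj2 := (j t).2; have hi2 := (i t).2
  by_cases hjn : (j t).1 < n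
  · rw [if_pos hjn] at h
    have h' : (j t).1 ≤ (i t).1 := h
    unfold fp; rw [if_pos hjn]; split <;> omega
  · rw [if_neg hjn] at h
    obtain ⟨h1, h2⟩ := h
    have h2' : (i t).1 ≤ (j t).1 := h2
    unfold fp; rw [if_neg hjn, if_neg (by omega)]; omega

lemma no_pair_J {j : Fin d → Fin (2*n)} (hj : IsSpTuple n j) (s t : Fin d) :
    Jmat k n (j s) (j t) = 0 := by
  apply Jmat_ne
  intro hc
  have hc' := congrArg Fin.val hc
  have h2 := (j s).2
  rcases Nat.lt_or_ge (j s).1 n with h | h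
  · rw [pt_val_lt h] at hc'
    exact hj.2 s t hc'
  · rw [pt_val_ge h] at hc'
    exact hj.2 t s (by omega)

lemma isotropic_span {ι : Type*} (f : ι → Fin (2*n) → k)
    (h : ∀ s t, omg (f s) (f t) = 0) :
    IsIsotropic k n (Submodule.span k (Set.range f)) := by
  intro u hu w hw
  have h1 : ∀ x : Fin (2*n) → k, (∀ t, omg x (f t) = 0) →
      ∀ w' ∈ Submodule.span k (Set.range f), omg x w' = 0 := by
    intro x hx w' hw'
    induction hw' using Submodule.span_induction with
    | mem y hy => obtain ⟨t, rfl⟩ := hy; exact hx t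
    | zero => exact omg_zero_right x
    | add y z _ _ hy hz => rw [omg_add_right, hy, hz, add_zero]
    | smul c y _ hy => rw [omg_smul_right, hy, mul_zero]
  have h2 : ∀ u' ∈ Submodule.span k (Set.range f), omg u' w = 0 := by
    intro u' hu'
    induction hu' using Submodule.span_induction with
    | mem y hy => obtain ⟨s, rfl⟩ := hy; exact h1 (f s) (fun t => h s t) w hw
    | zero => exact omg_zero_left w
    | add y z _ _ hy hz => rw [omg_add_left, hy, hz, add_zero]
    | smul c y _ hy => rw [omg_smul_left, hy, mul_zero]
  exact h2 u hu

lemma single_linearIndependent {j : Fin d → Fin (2*n)} (hj : Function.Injective j) :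
    LinearIndependent k (fun t : Fin d => (Pi.single (j t) 1 : Fin (2*n) → k)) := by
  have hb := (Pi.basisFun k (Fin (2*n))).linearIndependent
  have h := hb.comp j hj
  have heq : (⇑(Pi.basisFun k (Fin (2*n))) ∘ j)
      = fun t : Fin d => (Pi.single (j t) 1 : Fin (2*n) → k) := by
    funext t; exact Pi.basisFun_apply k _ (j t)
  rwa [heq] at h

theorem forward_dir (i j : Fin d → Fin (2*n)) (hj : IsSpTuple n j) (hji : spGE n i j)
    (M : Matrix (Fin (2*n)) (Fin (2*n)) k) (hM : inB k n M) :
    IsIsotropic k n (Submodule.map M.mulVecLin (eSpan k j)) ∧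
    Module.finrank k ↥(Submodule.map M.mulVecLin (eSpan k j)) = d ∧
    ∀ t : Fin d, t.1 + 1 ≤
      Module.finrank k ↥(Submodule.map M.mulVecLin (eSpan k j) ⊓ Kspace k n ((i t).1 + 1)) := by
  have hinj : Function.Injective M.mulVecLin := by
    intro x y hxy
    apply sympl_injective M hM.1
    simpa [Matrix.mulVecLin_apply] using hxy
  have hsing := single_linearIndependent (k := k) hj.1.1
  set g : Fin d → (Fin (2*n) → k) := fun t => M.mulVec (Pi.single (j t) 1) with hg
  have hmapspan : Submodule.map M.mulVecLin (eSpan k j) = Submodule.span k (Set.range g) := by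
    rw [eSpan, Submodule.map_span, ← Set.range_comp]
    rfl
  have hgind : LinearIndependent k g := by
    have := hsing.map' M.mulVecLin (LinearMap.ker_eq_bot.mpr hinj)
    exact this
  refine ⟨?_, ?_, ?_⟩
  · rw [hmapspan]
    apply isotropic_span
    intro s t
    have := omg_mulVec M hM.1 (Pi.single (j s) 1) (Pi.single (j t) 1)
    rw [hg]
    simp only []
    rw [this, omg_single_single, no_pair_J hj]
  · rw [hmapspan, finrank_span_eq_card hgind, Fintype.card_fin]
  · intro t
    rw [Kspace_eq_Fm (i t)]
    set W := Submodule.map M.mulVecLin (eSpan k j) ⊓ Fm k n (fp n (i t).1 + 1) with hW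
    have hmem : ∀ s : Fin d, s ≤ t → g s ∈ W := by
      intro s hst
      constructor
      · rw [hmapspan]; exact Submodule.subset_span (Set.mem_range_self s)
      · apply inB_mulVec_Fm hM
        apply single_mem_Fm
        have h1 := tuple_fp_mono hj.1 hst
        have h2 := spGE_fp hji t
        omega
    have hle : t.1 + 1 ≤ d := t.2
    set F : Fin (t.1+1) → ↥W := fun s => ⟨g (Fin.castLE hle s), hmem _ (by
      rw [Fin.le_def]
      have hs2 := s.2
      simp only [Fin.coe_castLE]
      omega)⟩ with hF
    have hFind : LinearIndependent k F := by
      apply LinearIndependent.of_comp W.subtype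
      have : W.subtype ∘ F = g ∘ Fin.castLE hle := rfl
      rw [this]
      exact hgind.comp _ (Fin.castLE_injective hle)
    have := hFind.fintype_card_le_finrank
    simpa using this

end SpAux

namespace SpAux

variable {k : Type*} [Field k] {n d : ℕ}

/-- inverse of the flag position function. -/
def fpi (n m : ℕ) (h : m < 2*n) : Fin (2*n) :=
  if h2 : m < n then ⟨m, by omega⟩ else ⟨3*n-1-m, by omega⟩

lemma fp_fpi {m : ℕ} (h : m < 2*n) : fp n (fpi n m h).1 = m := by
  unfold fpi
  split
  · show fp n m = m
    unfold fp; rw [if_pos ‹m < n›]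
  · show fp n (3*n-1-m) = m
    unfold fp; rw [if_neg (by omega)]; omega

lemma mem_Fm_succ {x : Fin (2*n) → k} {m : ℕ} {q0 : Fin (2*n)} (hq0 : fp n q0.1 = m) :
    x ∈ Fm k n m ↔ (x ∈ Fm k n (m+1) ∧ x q0 = 0) := by
  constructor
  · intro h
    exact ⟨Fm_mono (by omega) h, h q0 (by omega)⟩
  · rintro ⟨h1, h2⟩
    intro q hq
    rcases Nat.lt_or_ge (fp n q.1) (m+1) with h | h
    · have hqq : q = q0 := Fin.ext (fp_inj q.2 q0.2 (by omega))
      rwa [hqq]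
    · exact h1 q h

lemma finrank_inf_Fm_succ_le (U : Submodule k (Fin (2*n) → k)) {m : ℕ} (hm : m < 2*n) :
    Module.finrank k ↥(U ⊓ Fm k n (m+1)) ≤ Module.finrank k ↥(U ⊓ Fm k n m) + 1 := by
  classical
  set q0 := fpi n m hm with hq0def
  have hq0 := fp_fpi hm
  set X := U ⊓ Fm k n (m+1) with hX
  set f : ↥X →ₗ[k] k := (LinearMap.proj q0).comp X.subtype with hf
  have hker : (LinearMap.ker f).map X.subtype = U ⊓ Fm k n m := by
    ext x
    simp only [Submodule.mem_map, LinearMap.mem_ker, Submodule.mem_inf]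
    constructor
    · rintro ⟨y, hky, rfl⟩
      have hyX : (↑y : Fin (2*n) → k) ∈ U ⊓ Fm k n (m+1) := y.2
      obtain ⟨hyU, hyF⟩ := hyX
      have hcoord : (↑y : Fin (2*n) → k) q0 = 0 := hky
      exact ⟨hyU, (mem_Fm_succ hq0).mpr ⟨hyF, hcoord⟩⟩
    · intro hx
      have hx2 := (mem_Fm_succ hq0).mp hx.2
      refine ⟨⟨x, Submodule.mem_inf.mpr ⟨hx.1, hx2.1⟩⟩, ?_, rfl⟩
      exact hx2.2
  have h1 := LinearMap.finrank_range_add_finrank_ker f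
  have h2 : Module.finrank k ↥(LinearMap.range f) ≤ 1 := by
    have h3 := Submodule.finrank_le (LinearMap.range f)
    rwa [Module.finrank_self] at h3
  have h3 : Module.finrank k ↥(LinearMap.ker f) = Module.finrank k ↥(U ⊓ Fm k n m) := by
    rw [← hker, Submodule.finrank_map_subtype_eq]
  omega

/-- Gauss-Jordan reduction of the adapted vectors. -/
noncomputable def gjred (pv : Fin d → Fin (2*n)) (y : Fin d → (Fin (2*n) → k)) :
    (t : ℕ) → t < d → (Fin (2*n) → k)
  | t, ht => y ⟨t, ht⟩ - ∑ s ∈ (Finset.range t).attach,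
      y ⟨t, ht⟩ (pv ⟨s.1, by have := Finset.mem_range.1 s.2; omega⟩) •
        gjred pv y s.1 (by have := Finset.mem_range.1 s.2; omega)
  termination_by t _ => t
  decreasing_by exact Finset.mem_range.1 s.2

lemma gjred_eq (pv : Fin d → Fin (2*n)) (y : Fin d → (Fin (2*n) → k)) (t : ℕ) (ht : t < d) :
    gjred pv y t ht = y ⟨t, ht⟩ - ∑ s ∈ (Finset.range t).attach,
      y ⟨t, ht⟩ (pv ⟨s.1, by have := Finset.mem_range.1 s.2; omega⟩) •
        gjred pv y s.1 (by have := Finset.mem_range.1 s.2; omega) := by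
  rw [gjred]

end SpAux

namespace SpAux

variable {k : Type*} [Field k] {n d : ℕ}

theorem exists_jump_basis (U : Submodule k (Fin (2*n) → k))
    (hrank : Module.finrank k ↥U = d) :
    ∃ (pv : Fin d → Fin (2*n)) (u : Fin d → (Fin (2*n) → k)),
      (∀ s t : Fin d, s < t → fp n (pv s).1 < fp n (pv t).1) ∧
      (∀ (t : Fin d) (m : ℕ), t.1 + 1 ≤ Module.finrank k ↥(U ⊓ Fm k n m) →
        fp n (pv t).1 < m) ∧
      (∀ t, u t ∈ U) ∧
      (∀ t, u t ∈ Fm k n (fp n (pv t).1 + 1)) ∧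
      (∀ t s, u t (pv s) = if s = t then 1 else 0) ∧
      Submodule.span k (Set.range u) = U := by
  classical
  have hex : ∀ t : Fin d, ∃ m, t.1 + 1 ≤ Module.finrank k ↥(U ⊓ Fm k n m) := by
    intro t
    refine ⟨2*n, ?_⟩
    rw [Fm_top, inf_top_eq, hrank]
    exact t.2
  set mS : Fin d → ℕ := fun t => Nat.find (hex t) with hmS
  have hspec : ∀ t, t.1 + 1 ≤ Module.finrank k ↥(U ⊓ Fm k n (mS t)) :=
    fun t => Nat.find_spec (hex t)
  have hmin : ∀ (t : Fin d) (m : ℕ), m < mS t →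
      Module.finrank k ↥(U ⊓ Fm k n m) ≤ t.1 := by
    intro t m hm
    have := Nat.find_min (hex t) hm
    omega
  have hminle : ∀ (t : Fin d) (m : ℕ),
      t.1 + 1 ≤ Module.finrank k ↥(U ⊓ Fm k n m) → mS t ≤ m :=
    fun t m h => Nat.find_min' (hex t) h
  have hle2n : ∀ t, mS t ≤ 2*n := fun t =>
    hminle t (2*n) (by rw [Fm_top, inf_top_eq, hrank]; exact t.2)
  have hpos : ∀ t, 0 < mS t := by
    intro t
    rcases Nat.eq_zero_or_pos (mS t) with h | h
    · exfalso
      have h2 := hspec t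
      rw [h, Fm_zero, inf_bot_eq, finrank_bot] at h2
      omega
    · exact h
  have hmono : ∀ s t : Fin d, s < t → mS s < mS t := by
    intro s t hst
    by_contra hc
    push_neg at hc
    have h1 := hspec t
    have h2 : Module.finrank k ↥(U ⊓ Fm k n (mS t)) ≤
        Module.finrank k ↥(U ⊓ Fm k n (mS s)) :=
      Submodule.finrank_mono (inf_le_inf_left U (Fm_mono hc))
    have h4 := finrank_inf_Fm_succ_le U
      (show mS s - 1 < 2*n by have := hle2n s; have := hpos s; omega)
    have h5 : mS s - 1 + 1 = mS s := by have := hpos s; omega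
    rw [h5] at h4
    have h6 := hmin s (mS s - 1) (by have := hpos s; omega)
    have h7 : s.1 < t.1 := hst
    omega
  have hpvlt : ∀ t : Fin d, mS t - 1 < 2*n := fun t => by
    have := hle2n t; have := hpos t; omega
  set pv : Fin d → Fin (2*n) := fun t => fpi n (mS t - 1) (hpvlt t) with hpv
  have hfppv : ∀ t, fp n (pv t).1 = mS t - 1 := fun t => fp_fpi _
  have hxt : ∀ t : Fin d, ∃ x, x ∈ U ∧ x ∈ Fm k n (mS t) ∧ x (pv t) ≠ 0 := by
    intro t
    by_contra hc
    push_neg at hc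
    have hsub : U ⊓ Fm k n (mS t) ≤ U ⊓ Fm k n (mS t - 1) := by
      intro x hx
      rw [Submodule.mem_inf] at hx ⊢
      obtain ⟨hxU, hxF⟩ := hx
      refine ⟨hxU, ?_⟩
      rw [mem_Fm_succ (show fp n (pv t).1 = mS t - 1 from hfppv t)]
      have h5 : mS t - 1 + 1 = mS t := by have := hpos t; omega
      rw [h5]
      exact ⟨hxF, hc x hxU hxF⟩
    have h1 := hspec t
    have h2 := Submodule.finrank_mono hsub
    have h3 := hmin t (mS t - 1) (by have := hpos t; omega)
    omega
  choose xx hxU hxF hxne using hxt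
  set y : Fin d → (Fin (2*n) → k) := fun t => (xx t (pv t))⁻¹ • xx t with hy
  have hyU : ∀ t, y t ∈ U := fun t => Submodule.smul_mem U _ (hxU t)
  have hyF : ∀ t, y t ∈ Fm k n (mS t) := fun t => Submodule.smul_mem _ _ (hxF t)
  have hypv : ∀ t, y t (pv t) = 1 := by
    intro t
    rw [hy]
    simp only [Pi.smul_apply, smul_eq_mul]
    exact inv_mul_cancel₀ (hxne t)
  set u : Fin d → (Fin (2*n) → k) := fun t => gjred pv y t.1 t.2 with hu
  have main : ∀ t : ℕ, ∀ ht : t < d,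
      (gjred pv y t ht ∈ U) ∧ (gjred pv y t ht ∈ Fm k n (mS ⟨t, ht⟩)) ∧
      (∀ s : Fin d, gjred pv y t ht (pv s) = if s = ⟨t, ht⟩ then 1 else 0) := by
    intro t
    induction t using Nat.strong_induction_on with
    | _ t IH =>
      intro ht
      rw [gjred_eq]
      have hsval : ∀ s : {x // x ∈ Finset.range t}, s.1 < t := fun s => Finset.mem_range.1 s.2
      refine ⟨?_, ?_, ?_⟩
      · apply Submodule.sub_mem _ (hyU _)
        apply Submodule.sum_mem
        intro s _
        exact Submodule.smul_mem _ _ ((IH s.1 (hsval s) _).1)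
      · apply Submodule.sub_mem _ (hyF _)
        apply Submodule.sum_mem
        intro s _
        apply Submodule.smul_mem
        refine Fm_mono ?_ ((IH s.1 (hsval s) _).2.1)
        have hst : (⟨s.1, Nat.lt_trans (hsval s) ht⟩ : Fin d) < ⟨t, ht⟩ := hsval s
        exact le_of_lt (hmono _ _ hst)
      · intro s0
        rw [Pi.sub_apply, Finset.sum_apply]
        by_cases h : s0.1 < t
        · rw [if_neg (by intro hc; rw [hc] at h; exact lt_irrefl _ h)]
          rw [Finset.sum_eq_single (⟨s0.1, Finset.mem_range.2 h⟩ : {x // x ∈ Finset.range t})]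
          · rw [Pi.smul_apply, smul_eq_mul]
            have heq : (⟨s0.1, by omega⟩ : Fin d) = s0 := Fin.ext rfl
            rw [(IH s0.1 h _).2.2 s0, if_pos heq.symm, mul_one, heq]
            ring
          · intro s _ hs
            rw [Pi.smul_apply, smul_eq_mul]
            have hne : s0 ≠ (⟨s.1, by have := hsval s; omega⟩ : Fin d) := by
              intro hc
              apply hs
              apply Subtype.ext
              have := congrArg Fin.val hc
              simpa using this.symm
            rw [(IH s.1 (hsval s) _).2.2 s0, if_neg hne, mul_zero]
          · intro hmem; exact absurd (Finset.mem_attach _ _) hmem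
        · have hzero : ∀ s : {x // x ∈ Finset.range t},
              gjred pv y s.1 (by have := hsval s; omega) (pv s0) = 0 := by
            intro s
            have hne : s0 ≠ (⟨s.1, by have := hsval s; omega⟩ : Fin d) := by
              intro hc
              have := congrArg Fin.val hc
              simp at this
              have := hsval s
              omega
            rw [(IH s.1 (hsval s) _).2.2 s0, if_neg hne]
          rw [Finset.sum_eq_zero (fun s _ => by
            rw [Pi.smul_apply, smul_eq_mul, hzero s, mul_zero])]
          by_cases h2 : s0 = (⟨t, ht⟩ : Fin d)
          · rw [if_pos h2, h2, hypv]
            ring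
          · rw [if_neg h2]
            have hst : (⟨t, ht⟩ : Fin d) < s0 := by
              rw [Fin.lt_def]
              have : s0.1 ≠ t := fun hc => h2 (Fin.ext hc)
              simp only []
              omega
            have hfp : mS ⟨t, ht⟩ ≤ fp n (pv s0).1 := by
              rw [hfppv s0]
              have := hmono _ _ hst
              omega
            rw [hyF ⟨t, ht⟩ (pv s0) hfp]
            ring
  have hmain : ∀ t : Fin d, (u t ∈ U) ∧ (u t ∈ Fm k n (mS t)) ∧
      (∀ s, u t (pv s) = if s = t then 1 else 0) := fun t => main t.1 t.2
  have huind : LinearIndependent k u := by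
    rw [Fintype.linearIndependent_iff]
    intro g hg s
    have hcf := congrFun hg (pv s)
    rw [Finset.sum_apply, Pi.zero_apply] at hcf
    rw [Finset.sum_eq_single s] at hcf
    · rw [Pi.smul_apply, smul_eq_mul, (hmain s).2.2 s, if_pos rfl, mul_one] at hcf
      exact hcf
    · intro t _ hts
      rw [Pi.smul_apply, smul_eq_mul, (hmain t).2.2 s, if_neg (Ne.symm hts), mul_zero]
    · intro hmem; exact absurd (Finset.mem_univ _) hmem
  have hspan : Submodule.span k (Set.range u) = U := by
    apply Submodule.eq_of_le_of_finrank_le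
    · rw [Submodule.span_le]
      rintro v ⟨t, rfl⟩
      exact (hmain t).1
    · rw [finrank_span_eq_card huind, Fintype.card_fin, hrank]
  refine ⟨pv, u, ?_, ?_, fun t => (hmain t).1, ?_, fun t s => (hmain t).2.2 s, hspan⟩
  · intro s t hst
    rw [hfppv, hfppv]
    have h1 := hmono s t hst
    have := hpos s
    omega
  · intro t m hm
    have h1 := hminle t m hm
    rw [hfppv]
    have := hpos t
    omega
  · intro t
    have h5 : fp n (pv t).1 + 1 = mS t := by rw [hfppv]; have := hpos t; omega
    rw [h5]
    exact (hmain t).2.1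

end SpAux

namespace SpAux

variable {k : Type*} [Field k] {n d : ℕ}

lemma Jmat_antisym (p q : Fin (2*n)) : Jmat k n q p = - Jmat k n p q := by
  rw [Jmat_eq, Jmat_eq]
  by_cases h : q = pt p
  · subst h
    rw [if_pos (pt_pt p).symm, if_pos rfl, sg_pt, neg_neg]
  · rw [if_neg h, if_neg (fun hc => h (pt_eq_iff.mp hc.symm)), neg_zero]

lemma mulVec_single_col (M : Matrix (Fin (2*n)) (Fin (2*n)) k) (p : Fin (2*n)) :
    M.mulVec (Pi.single p 1) = fun q => M q p := by
  funext q
  have h : M.mulVec (Pi.single p 1) q = ∑ c, M q c * (Pi.single p 1 : Fin (2*n) → k) c := rfl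
  rw [h, Finset.sum_eq_single p]
  · rw [Pi.single_eq_same, mul_one]
  · intro c _ hc; rw [single_apply_ne hc, mul_zero]
  · intro hmem; exact absurd (Finset.mem_univ _) hmem

theorem build_matrix (pv : Fin d → Fin (2*n)) (u : Fin d → Fin (2*n) → k)
    (hpvinj : Function.Injective pv)
    (hF : ∀ t, u t ∈ Fm k n (fp n (pv t).1 + 1))
    (hpiv : ∀ t s, u t (pv s) = if s = t then 1 else 0)
    (hiso : ∀ s t, omg (u s) (u t) = 0)
    (hnp : ∀ s t : Fin d, (pv t).1 ≠ (pv s).1 + n) :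
    ∃ M : Matrix (Fin (2*n)) (Fin (2*n)) k, inB k n M ∧
      Submodule.map M.mulVecLin (eSpan k pv) = Submodule.span k (Set.range u) := by
  classical
  have usup : ∀ (t : Fin d) (q : Fin (2*n)), fp n (pv t).1 < fp n q.1 → u t q = 0 :=
    fun t q h => hF t q (by omega)
  have pv_ne_pt : ∀ s t : Fin d, pv t ≠ pt (pv s) := by
    intro s t hc
    have hc' := congrArg Fin.val hc
    have h2 := (pv s).2
    rcases Nat.lt_or_ge (pv s).1 n with h | h
    · rw [pt_val_lt h] at hc'
      exact hnp s t hc'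
    · rw [pt_val_ge h] at hc'
      exact hnp t s (by omega)
  have hdvlt : True := trivial
  set dv : Fin d → (Fin (2*n) → k) :=
    fun t => (-(sg (pv t)) : k) • (Pi.single (pt (pv t)) 1 : Fin (2*n) → k) with hdvs
  have hdv : ∀ t, dv t = (-(sg (pv t)) : k) • (Pi.single (pt (pv t)) 1 : Fin (2*n) → k) :=
    fun t => rfl
  have omg_dv : ∀ (x : Fin (2*n) → k) (t : Fin d), omg x (dv t) = x (pv t) := by
    intro x t
    rw [hdv, omg_smul_right, omg_single_right, pt_pt, sg_pt]
    have h := sg_mul_sg (k := k) (pv t)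
    calc -sg (pv t) * (x (pv t) * -sg (pv t))
        = x (pv t) * (sg (pv t) * sg (pv t)) := by ring
      _ = x (pv t) := by rw [h, mul_one]
  have omg_dv_dv : ∀ s t : Fin d, omg (dv s) (dv t) = 0 := by
    intro s t
    rw [omg_antisymm, omg_dv, hdv, Pi.smul_apply, single_apply_ne (pv_ne_pt t s), smul_zero,
      neg_zero]
  set β : Fin d → Fin (2*n) → k :=
    fun t c => Jmat k n (pv t) c - omg (u t) (Pi.single c 1) with hβs
  have hβ : ∀ t c, β t c = Jmat k n (pv t) c - omg (u t) (Pi.single c 1) := fun t c => rfl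
  set wcol : Fin (2*n) → (Fin (2*n) → k) :=
    fun c => (Pi.single c 1 : Fin (2*n) → k) + ∑ t, β t c • dv t with hwcols
  have hwcol : ∀ c, wcol c = (Pi.single c 1 : Fin (2*n) → k) + ∑ t, β t c • dv t :=
    fun c => rfl
  set col : Fin (2*n) → (Fin (2*n) → k) :=
    fun c => if h : ∃ t, pv t = c then u h.choose else wcol c with hcols
  have col_pv : ∀ t : Fin d, col (pv t) = u t := by
    intro t
    have he : ∃ s, pv s = pv t := ⟨t, rfl⟩
    have h1 : col (pv t) = u he.choose := dif_pos he
    rw [h1]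
    exact congrArg u (hpvinj he.choose_spec)
  have col_np : ∀ c : Fin (2*n), (¬ ∃ t, pv t = c) → col c = wcol c :=
    fun c hc => dif_neg hc
  have omg_u_wcol : ∀ (s : Fin d) (c : Fin (2*n)), omg (u s) (wcol c) = Jmat k n (pv s) c := by
    intro s c
    rw [hwcol, omg_add_right, omg_sum_right]
    have hterm : ∀ t : Fin d, omg (u s) (β t c • dv t) = if t = s then β s c else 0 := by
      intro t
      rw [omg_smul_right, omg_dv, hpiv s t]
      by_cases h : t = s
      · rw [if_pos h, if_pos h, mul_one, h]
      · rw [if_neg h, if_neg h, mul_zero]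
    rw [Finset.sum_congr rfl (fun t _ => hterm t), Finset.sum_ite_eq' Finset.univ s
      (fun _ => β s c), if_pos (Finset.mem_univ s), hβ]
    ring
  have omg_e_dv0 : ∀ (c : Fin (2*n)), (¬ ∃ t, pv t = c) → ∀ t : Fin d,
      omg (Pi.single c 1 : Fin (2*n) → k) (dv t) = 0 := by
    intro c hc t
    rw [omg_dv]
    exact single_apply_ne (show pv t ≠ c from fun h => hc ⟨t, h⟩) 1
  have omg_wcol_wcol : ∀ a b : Fin (2*n), (¬ ∃ t, pv t = a) → (¬ ∃ t, pv t = b) →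
      omg (wcol a) (wcol b) = Jmat k n a b := by
    intro a b ha hb
    have hSb : omg (Pi.single a 1 : Fin (2*n) → k) (∑ t, β t b • dv t) = 0 := by
      rw [omg_sum_right, Finset.sum_eq_zero]
      intro t _
      rw [omg_smul_right, omg_e_dv0 a ha t, mul_zero]
    have hdvwb : ∀ t : Fin d, omg (dv t) (wcol b) = 0 := by
      intro t
      have h3 : omg (dv t) (Pi.single b 1 : Fin (2*n) → k) = 0 := by
        rw [omg_antisymm, omg_e_dv0 b hb t, neg_zero]
      rw [hwcol, omg_add_right, h3, omg_sum_right, Finset.sum_eq_zero (fun s _ => by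
        rw [omg_smul_right, omg_dv_dv, mul_zero]), add_zero]
    have hSawb : omg (∑ t, β t a • dv t) (wcol b) = 0 := by
      rw [omg_sum_left, Finset.sum_eq_zero]
      intro t _
      rw [omg_smul_left, hdvwb t, mul_zero]
    rw [hwcol a, omg_add_left, hSawb, add_zero, hwcol b, omg_add_right, hSb, add_zero,
      omg_single_single]
  -- the matrix
  set M : Matrix (Fin (2*n)) (Fin (2*n)) k := Matrix.of (fun q c => col c q) with hM
  have hMcol : ∀ c : Fin (2*n), (fun q => M q c) = col c := fun c => rfl
  have hsymp : Mᵀ * Jmat k n * M = Jmat k n := by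
    rw [sympl_iff]
    intro a b
    rw [hMcol, hMcol]
    by_cases ha : ∃ s, pv s = a
    · obtain ⟨s, rfl⟩ := ha
      by_cases hb : ∃ t, pv t = b
      · obtain ⟨t, rfl⟩ := hb
        rw [col_pv, col_pv, hiso s t, Jmat_ne (pv_ne_pt s t)]
      · rw [col_pv, col_np b hb, omg_u_wcol]
    · by_cases hb : ∃ t, pv t = b
      · obtain ⟨t, rfl⟩ := hb
        rw [col_np a ha, col_pv, omg_antisymm, omg_u_wcol, Jmat_antisym (pv t) a]
      · rw [col_np a ha, col_np b hb, omg_wcol_wcol a b ha hb]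
  have colsupp : ∀ c q : Fin (2*n), fp n c.1 < fp n q.1 → col c q = 0 := by
    intro c q hfp
    by_cases hc : ∃ t, pv t = c
    · obtain ⟨t, rfl⟩ := hc
      rw [col_pv]
      exact usup t q hfp
    · rw [col_np c hc, hwcol, Pi.add_apply, Finset.sum_apply]
      have hqc : q ≠ c := fun hqc => by rw [hqc] at hfp; exact lt_irrefl _ hfp
      rw [single_apply_ne hqc 1, zero_add]
      apply Finset.sum_eq_zero
      intro t _
      rw [Pi.smul_apply, hdv, Pi.smul_apply, smul_eq_mul, smul_eq_mul]
      by_cases hq : q = pt (pv t)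
      · have hβ0 : β t c = 0 := by
          rw [hβ]
          have hJ : Jmat k n (pv t) c = 0 := by
            apply Jmat_ne
            intro hcc
            rw [hcc, ← hq] at hfp
            exact lt_irrefl _ hfp
          have hu0 : u t (pt c) = 0 := by
            apply usup
            have h1 := fp_pt c
            have h2 := fp_pt (pv t)
            have h3 := fp_lt c.2
            have h4 := fp_lt (pv t).2
            have h5 : fp n q.1 = fp n (pt (pv t)).1 := by rw [hq]
            omega
          rw [omg_single_right, hJ, hu0, zero_mul, sub_zero]
        rw [hβ0, zero_mul]
      · rw [single_apply_ne hq 1, mul_zero, mul_zero]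
  have hinB : inB k n M := by
    refine ⟨hsymp, ?_⟩
    intro a b hab
    show col b a = 0
    apply colsupp
    have ha2 := a.2; have hb2 := b.2
    unfold fp
    rcases hab with ⟨h1, h2⟩ | ⟨h1, h2, h3⟩
    · rw [if_pos h2, if_neg (by omega)]; omega
    · rw [if_pos h2, if_pos h1]; omega
  refine ⟨M, hinB, ?_⟩
  rw [eSpan, Submodule.map_span, ← Set.range_comp]
  have hfun : (⇑M.mulVecLin ∘ fun t => (Pi.single (pv t) 1 : Fin (2*n) → k)) = u := by
    funext t
    show M.mulVec (Pi.single (pv t) 1) = u t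
    rw [mulVec_single_col, hMcol, col_pv]
  rw [hfun]

end SpAux

namespace SpAux

variable {k : Type*} [Field k] {n d : ℕ}

lemma pv_no_pair (pv : Fin d → Fin (2*n)) (u : Fin d → Fin (2*n) → k)
    (hF : ∀ t, u t ∈ Fm k n (fp n (pv t).1 + 1))
    (hpiv : ∀ t s, u t (pv s) = if s = t then 1 else 0)
    (hiso : ∀ s t, omg (u s) (u t) = 0) :
    ∀ s t : Fin d, (pv t).1 ≠ (pv s).1 + n := by
  intro s t hc
  have h2t := (pv t).2
  have hsn : (pv s).1 < n := by omega
  have hpt : pt (pv s) = pv t := Fin.ext (by rw [pt_val_lt hsn]; omega)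
  have usup : ∀ (r : Fin d) (q : Fin (2*n)), fp n (pv r).1 < fp n q.1 → u r q = 0 :=
    fun r q h => hF r q (by omega)
  have hkey : omg (u s) (u t) = -1 := by
    rw [omg_eq_sum, Finset.sum_eq_single (pv s)]
    · rw [hpt]
      have e1 : u s (pv s) = 1 := by rw [hpiv s s, if_pos rfl]
      have e2 : u t (pv t) = 1 := by rw [hpiv t t, if_pos rfl]
      rw [e1, e2, one_mul, mul_one]
      show sg (pv t) = -1
      unfold sg; rw [if_neg (by omega)]
    · intro a _ hane
      by_cases hfa : fp n a.1 ≤ fp n (pv s).1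
      · have hlt : fp n a.1 < fp n (pv s).1 :=
          lt_of_le_of_ne hfa (fun h => hane (Fin.ext (fp_inj a.2 (pv s).2 h)))
        have h0 : u t (pt a) = 0 := by
          apply usup
          have h1 := fp_pt a
          have h4 := fp_lt a.2
          have h6 := fp_lt (pv s).2
          have h5 : fp n (pv t).1 = 2*n - 1 - fp n (pv s).1 := by
            rw [← hpt]; exact fp_pt (pv s)
          omega
        rw [h0, mul_zero, mul_zero]
      · rw [usup s a (by omega), zero_mul]
    · intro h; exact absurd (Finset.mem_univ _) h
  rw [hiso s t] at hkey
  exact (by norm_num : (0:k) ≠ -1) hkey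

lemma mk_bar (pv : Fin d → Fin (2*n))
    (hmono : ∀ s t : Fin d, s < t → fp n (pv s).1 < fp n (pv t).1) :
    IsSpBarTuple n pv := by
  classical
  have hinj : Function.Injective pv := by
    intro s t h
    by_contra hne
    rcases lt_or_gt_of_ne (fun hc : s = t => hne hc) with hlt | hlt
    · have := hmono s t hlt; rw [h] at this; omega
    · have := hmono t s hlt; rw [h] at this; omega
  have hfplt : ∀ q : Fin (2*n), (q.1 < n ↔ fp n q.1 < n) := by
    intro q; have := q.2; unfold fp; split <;> omega
  refine ⟨hinj, ?_⟩
  have hPex : ∃ m : ℕ, ∀ t : Fin d, m ≤ t.1 → n ≤ (pv t).1 :=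
    ⟨d, fun t ht => absurd t.2 (by omega)⟩
  set r := Nat.find hPex with hr
  have hrud : r ≤ d := Nat.find_min' hPex (fun t ht => absurd t.2 (by omega))
  have hge : ∀ t : Fin d, r ≤ t.1 → n ≤ (pv t).1 := Nat.find_spec hPex
  have hlt : ∀ t : Fin d, t.1 < r → (pv t).1 < n := by
    intro t ht
    have hnp := Nat.find_min hPex ht
    push_neg at hnp
    obtain ⟨t', ht', hlt'⟩ := hnp
    by_contra hcon
    push_neg at hcon
    have h1 : n ≤ fp n (pv t).1 := by have := hfplt (pv t); omega
    have h2 : fp n (pv t').1 < n := by have := hfplt (pv t'); omega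
    rcases eq_or_lt_of_le ht' with heq | hlt2
    · have : t = t' := Fin.ext heq
      rw [this] at hcon; omega
    · have := hmono t t' hlt2
      omega
  refine ⟨r, hrud, ?_, hlt, ?_, hge⟩
  · intro a b hab hbr
    have ha := hlt a (by have : a.1 < b.1 := hab; omega)
    have hb := hlt b hbr
    have h := hmono a b hab
    have e1 : fp n (pv a).1 = (pv a).1 := if_pos ha
    have e2 : fp n (pv b).1 = (pv b).1 := if_pos hb
    rw [Fin.lt_def]
    omega
  · intro a b hab hra
    have ha := hge a hra
    have hb := hge b (by have : a.1 < b.1 := hab; omega)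
    have h := hmono a b hab
    have e1 : fp n (pv a).1 = 3*n - 1 - (pv a).1 := if_neg (by omega)
    have e2 : fp n (pv b).1 = 3*n - 1 - (pv b).1 := if_neg (by omega)
    have h2a := (pv a).2; have h2b := (pv b).2
    rw [Fin.lt_def]
    omega

lemma mk_spGE (i pv : Fin d → Fin (2*n))
    (h : ∀ t, fp n (pv t).1 ≤ fp n (i t).1) : spGE n i pv := by
  intro t
  have h1 := h t
  have hp2 := (pv t).2; have hi2 := (i t).2
  by_cases hn : (pv t).1 < n
  · rw [if_pos hn, Fin.le_def]
    unfold fp at h1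
    split at h1 <;> split at h1 <;> omega
  · rw [if_neg hn]
    unfold fp at h1
    constructor
    · split at h1 <;> split at h1 <;> omega
    · rw [Fin.le_def]
      split at h1 <;> split at h1 <;> omega

theorem backward_dir (U : Submodule k (Fin (2*n) → k))
    (hiso : IsIsotropic k n U) (hrank : Module.finrank k ↥U = d) :
    ∃ pv : Fin d → Fin (2*n), IsSpTuple n pv ∧
      (∀ (t : Fin d) (m : ℕ), t.1 + 1 ≤ Module.finrank k ↥(U ⊓ Fm k n m) →
        fp n (pv t).1 < m) ∧
      ∃ M : Matrix (Fin (2*n)) (Fin (2*n)) k, inB k n M ∧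
        U = Submodule.map M.mulVecLin (eSpan k pv) := by
  obtain ⟨pv, u, hmono, hdims, huU, huF, hupiv, hspan⟩ := exists_jump_basis U hrank
  have hisou : ∀ s t, omg (u s) (u t) = 0 := fun s t => hiso (u s) (huU s) (u t) (huU t)
  have hnp := pv_no_pair pv u huF hupiv hisou
  have hbar := mk_bar pv hmono
  obtain ⟨M, hMB, hMmap⟩ := build_matrix pv u hbar.1 huF hupiv hisou hnp
  exact ⟨pv, ⟨hbar, hnp⟩, hdims, M, hMB, by rw [hMmap, hspan]⟩

end SpAux

/-- set-theoretic description of the Schubert variety `X_i` in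
`Sp_{2n}(k)/P_d`: for `1 ≤ d ≤ n` and `i ∈ I^{Sp}_{d,2n}`, the union over
`j ∈ I^{Sp}_{d,2n}` with `j ≤^{Sp} i` of the `B`-orbits of `e_j` equals the set of
`d`-dimensional isotropic subspaces `U ⊆ k^{2n}` with `dim(U ∩ K_{i_t}) ≥ t` for all
`1 ≤ t ≤ d`. -/
theorem stmt9 {k : Type*} [Field k] [IsAlgClosed k] (n d : ℕ) (hd1 : 1 ≤ d) (hdn : d ≤ n)
    (i : Fin d → Fin (2*n)) (hi : IsSpTuple n i) :
    {V : Submodule k (Fin (2*n) → k) |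
        ∃ j : Fin d → Fin (2*n), IsSpTuple n j ∧ spGE n i j ∧
          ∃ M : Matrix (Fin (2*n)) (Fin (2*n)) k,
            inB k n M ∧ V = Submodule.map M.mulVecLin (eSpan k j)}
      = {U : Submodule k (Fin (2*n) → k) |
          IsIsotropic k n U ∧ Module.finrank k U = d ∧
          ∀ t : Fin d, t.1 + 1 ≤ Module.finrank k ↥(U ⊓ Kspace k n ((i t).1 + 1))} := by
  ext U
  simp only [Set.mem_setOf_eq]
  constructor
  · rintro ⟨j, hj, hji, M, hM, rfl⟩
    exact SpAux.forward_dir i j hj hji M hM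
  · rintro ⟨hiso, hrank, hdim⟩
    obtain ⟨pv, hpv, hdims, M, hMB, hU⟩ := SpAux.backward_dir U hiso hrank
    refine ⟨pv, hpv, SpAux.mk_spGE i pv ?_, M, hMB, hU⟩
    intro t
    have h1 := hdim t
    rw [SpAux.Kspace_eq_Fm (i t)] at h1
    have h2 := hdims t _ h1
    omega
end
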